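/- arXiv:0708.1155 — 3 statements merged into one kernel-verified Lean document; each statement's English description precedes it below -/
import Mathlib

section
/- Let μ < 1/4. (a) If u is a small local sub-harmonic of L_μ then limsup_{δ(x)→0} u(x)/δ(x)^{β₊} < ∞. (b) If U is a large local sub-harmonic of L_μ then limsup_{δ(x)→0} U(x)/δ(x)^{β₋} > 0. -/
open Set Metric MeasureTheory Real

noncomputable section

/-- Distance to the boundary of `Ω`. -/
def bdist {N : ℕ} (Ω : Set (EuclideanSpace ℝ (Fin N))) (x : EuclideanSpace ℝ (Fin N)) : ℝ :=
  Metric.infDist x Ωᶜ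

/-- The collar `Ω_ρ = {x ∈ Ω : δ(x) < ρ}`. -/
def collar {N : ℕ} (Ω : Set (EuclideanSpace ℝ (Fin N))) (ρ : ℝ) :
    Set (EuclideanSpace ℝ (Fin N)) :=
  {x ∈ Ω | bdist Ω x < ρ}

/-- The ring `Ω_{ε,ρ} = {x ∈ Ω : ε < δ(x) < ρ}`. -/
def ring' {N : ℕ} (Ω : Set (EuclideanSpace ℝ (Fin N))) (ε ρ : ℝ) :
    Set (EuclideanSpace ℝ (Fin N)) :=
  {x ∈ Ω | ε < bdist Ω x ∧ bdist Ω x < ρ}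

/-- The Laplacian. -/
def lap {N : ℕ} (f : EuclideanSpace ℝ (Fin N) → ℝ) (x : EuclideanSpace ℝ (Fin N)) : ℝ :=
  ∑ i : Fin N, fderiv ℝ (fun y => fderiv ℝ f y (EuclideanSpace.single i 1)) x
    (EuclideanSpace.single i 1)

/-- `ρ₀` is a good collar width: `δ` is `C²` on `Ω_{ρ₀}`, `|∇δ| = 1` there, `Δδ` bounded. -/
def GoodCollar {N : ℕ} (Ω : Set (EuclideanSpace ℝ (Fin N))) (ρ₀ : ℝ) : Prop :=
  0 < ρ₀ ∧ ContDiffOn ℝ 2 (bdist Ω) (collar Ω ρ₀) ∧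
    (∀ x ∈ collar Ω ρ₀, ‖gradient (bdist Ω) x‖ = 1) ∧
    ∃ M, ∀ x ∈ collar Ω ρ₀, |lap (bdist Ω) x| ≤ M

/-- A super-harmonic of `L_μ = -Δ - μ/δ²` on `G`. -/
def SuperHarm {N : ℕ} (Ω : Set (EuclideanSpace ℝ (Fin N))) (μ : ℝ)
    (G : Set (EuclideanSpace ℝ (Fin N))) (h : EuclideanSpace ℝ (Fin N) → ℝ) : Prop :=
  ContDiffOn ℝ 2 h G ∧ ∀ x ∈ G, 0 ≤ -(lap h x) - μ / (bdist Ω x) ^ 2 * h x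

/-- A sub-harmonic of `L_μ = -Δ - μ/δ²` on `G`. -/
def SubHarm {N : ℕ} (Ω : Set (EuclideanSpace ℝ (Fin N))) (μ : ℝ)
    (G : Set (EuclideanSpace ℝ (Fin N))) (h : EuclideanSpace ℝ (Fin N) → ℝ) : Prop :=
  ContDiffOn ℝ 2 h G ∧ ∀ x ∈ G, -(lap h x) - μ / (bdist Ω x) ^ 2 * h x ≤ 0

/-- A positive local super-harmonic of `L_μ`, defined on the collar `Ω_σ`. -/
def PosSuperHarmOn {N : ℕ} (Ω : Set (EuclideanSpace ℝ (Fin N))) (μ σ : ℝ)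
    (h : EuclideanSpace ℝ (Fin N) → ℝ) : Prop :=
  SuperHarm Ω μ (collar Ω σ) h ∧ ∀ x ∈ collar Ω σ, 0 < h x

/-- A sub-solution of `(*)`: `-Δu - (μ/δ²)u + u^p/δ^s = 0` on `G`. -/
def SubSol {N : ℕ} (Ω : Set (EuclideanSpace ℝ (Fin N))) (μ s p : ℝ)
    (G : Set (EuclideanSpace ℝ (Fin N))) (u : EuclideanSpace ℝ (Fin N) → ℝ) : Prop :=
  ContDiffOn ℝ 2 u G ∧ (∀ x ∈ G, 0 ≤ u x) ∧
    ∀ x ∈ G, -(lap u x) - μ / (bdist Ω x) ^ 2 * u x + (u x) ^ p / (bdist Ω x) ^ s ≤ 0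

/-- A super-solution of `(*)` on `G`. -/
def SuperSol {N : ℕ} (Ω : Set (EuclideanSpace ℝ (Fin N))) (μ s p : ℝ)
    (G : Set (EuclideanSpace ℝ (Fin N))) (u : EuclideanSpace ℝ (Fin N) → ℝ) : Prop :=
  ContDiffOn ℝ 2 u G ∧ (∀ x ∈ G, 0 < u x) ∧
    ∀ x ∈ G, 0 ≤ -(lap u x) - μ / (bdist Ω x) ^ 2 * u x + (u x) ^ p / (bdist Ω x) ^ s

/-- A regularized distance `(d, c)` on `Ω`. -/
def RegDist {N : ℕ} (Ω : Set (EuclideanSpace ℝ (Fin N))) (d : EuclideanSpace ℝ (Fin N) → ℝ)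
    (c : ℝ) : Prop :=
  1 ≤ c ∧ ContDiffOn ℝ 2 d Ω ∧ (∀ x ∈ Ω, 0 < d x) ∧
    (∀ x ∈ Ω, c⁻¹ * bdist Ω x ≤ d x ∧ d x ≤ c * bdist Ω x) ∧
    (∀ x ∈ Ω, ‖gradient d x‖ ≤ c) ∧ (∀ x ∈ Ω, |lap d x| ≤ c / d x)

/-- A local sub-harmonic `u` (defined on `Ω_ρ`) is *small* if
`limsup_{δ(x)→0} u(x)/h(x) < ∞` for every positive local super-harmonic `h` of `L_μ`. -/
def SmallSubHarm {N : ℕ} (Ω : Set (EuclideanSpace ℝ (Fin N))) (μ : ℝ)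
    (u : EuclideanSpace ℝ (Fin N) → ℝ) (ρ : ℝ) : Prop :=
  ∀ σ, 0 < σ → ∀ h : EuclideanSpace ℝ (Fin N) → ℝ, PosSuperHarmOn Ω μ σ h →
    ∃ C : ℝ, ∃ τ, 0 < τ ∧ τ ≤ min ρ σ ∧ ∀ x ∈ collar Ω τ, u x / h x ≤ C

/-- A local sub-harmonic `u` (defined on `Ω_ρ`) is *large* if
`limsup_{δ(x)→0} u(x)/h(x) > 0` for every positive local super-harmonic `h` of `L_μ`. -/
def LargeSubHarm {N : ℕ} (Ω : Set (EuclideanSpace ℝ (Fin N))) (μ : ℝ)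
    (u : EuclideanSpace ℝ (Fin N) → ℝ) (ρ : ℝ) : Prop :=
  ∀ σ, 0 < σ → ∀ h : EuclideanSpace ℝ (Fin N) → ℝ, PosSuperHarmOn Ω μ σ h →
    ∃ c, 0 < c ∧ ∀ τ, 0 < τ → τ ≤ min ρ σ → ∃ x ∈ collar Ω τ, c ≤ u x / h x

open Filter
variable {N : ℕ}

lemma collar_open (Ω : Set (EuclideanSpace ℝ (Fin N))) (hΩo : IsOpen Ω) (ρ : ℝ) :
    IsOpen (collar Ω ρ) := by
  have h : collar Ω ρ = Ω ∩ (fun x => bdist Ω x) ⁻¹' (Set.Iio ρ) := rfl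
  rw [h]
  exact hΩo.inter (isOpen_Iio.preimage (continuous_infDist_pt _))

lemma collar_mono {Ω : Set (EuclideanSpace ℝ (Fin N))} {σ τ : ℝ} (h : σ ≤ τ) :
    collar Ω σ ⊆ collar Ω τ := fun x hx => ⟨hx.1, hx.2.trans_le h⟩

lemma compl_nonempty {Ω : Set (EuclideanSpace ℝ (Fin N))} (hN : 2 ≤ N)
    (hb : Bornology.IsBounded Ω) : Ωᶜ.Nonempty := by
  haveI : Nonempty (Fin N) := ⟨⟨0, by omega⟩⟩
  rcases Set.eq_empty_or_nonempty Ωᶜ with h | h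
  · exfalso
    have : Ω = Set.univ := by
      rw [← Set.compl_empty, ← h, compl_compl]
    rw [this] at hb
    exact NormedSpace.unbounded_univ ℝ (EuclideanSpace ℝ (Fin N)) hb
  · exact h

lemma bdist_pos {Ω : Set (EuclideanSpace ℝ (Fin N))} (hΩo : IsOpen Ω)
    (hne : Ωᶜ.Nonempty) {x : EuclideanSpace ℝ (Fin N)} (hx : x ∈ Ω) : 0 < bdist Ω x := by
  have := (hΩo.isClosed_compl.notMem_iff_infDist_pos hne).1 (by simpa using hx)
  simpa [bdist] using this

lemma sum_fderiv_sq (f : EuclideanSpace ℝ (Fin N) → ℝ) (x : EuclideanSpace ℝ (Fin N)) :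
    ∑ i : Fin N, (fderiv ℝ f x (EuclideanSpace.single i 1))^2 = ‖gradient f x‖^2 := by
  have hg : ∀ i : Fin N, fderiv ℝ f x (EuclideanSpace.single i 1) = gradient f x i := by
    intro i
    have h1 : (inner ℝ (gradient f x) (EuclideanSpace.single i (1:ℝ)) : ℝ)
        = fderiv ℝ f x (EuclideanSpace.single i 1) :=
      InnerProductSpace.toDual_symm_apply
    have h2 : (inner ℝ (gradient f x) (EuclideanSpace.single i (1:ℝ)) : ℝ) = gradient f x i := by
      rw [EuclideanSpace.inner_single_right]
      simp
    rw [← h1, h2]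
  simp_rw [hg]
  have : (inner ℝ (gradient f x) (gradient f x) : ℝ) = ‖gradient f x‖^2 :=
    real_inner_self_eq_norm_sq _
  rw [← this, PiLp.inner_apply]
  simp [pow_two]

lemma lap_comp {f : EuclideanSpace ℝ (Fin N) → ℝ} {φ φ' : ℝ → ℝ} {φ'' : ℝ}
    {x : EuclideanSpace ℝ (Fin N)}
    (hf : ContDiffAt ℝ 2 f x)
    (hφ' : ∀ᶠ t in nhds (f x), HasDerivAt φ (φ' t) t)
    (hφ'' : HasDerivAt φ' φ'' (f x)) :
    lap (fun y => φ (f y)) x =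
      φ'' * ∑ i : Fin N, (fderiv ℝ f x (EuclideanSpace.single i 1))^2
      + φ' (f x) * lap f x := by
  have hfd1 : DifferentiableAt ℝ f x := hf.differentiableAt two_ne_zero
  have hf2 : ∀ᶠ y in nhds x, ContDiffAt ℝ 2 f y := hf.eventually (by simp)
  have hfd : ∀ᶠ y in nhds x, DifferentiableAt ℝ f y :=
    hf2.mono fun y hy => hy.differentiableAt two_ne_zero
  have hφf : ∀ᶠ y in nhds x, HasDerivAt φ (φ' (f y)) (f y) :=
    hfd1.continuousAt.eventually hφ'
  have key : ∀ᶠ y in nhds x, fderiv ℝ (fun z => φ (f z)) y = φ' (f y) • fderiv ℝ f y := by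
    filter_upwards [hfd, hφf] with y h1 h2
    exact (h2.comp_hasFDerivAt y h1.hasFDerivAt).fderiv
  have hterm : ∀ i : Fin N,
      fderiv ℝ (fun y => fderiv ℝ (fun z => φ (f z)) y (EuclideanSpace.single i 1)) x
        (EuclideanSpace.single i 1)
      = φ' (f x) * fderiv ℝ (fun y => fderiv ℝ f y (EuclideanSpace.single i 1)) x
          (EuclideanSpace.single i 1)
        + fderiv ℝ f x (EuclideanSpace.single i 1) *
            (φ'' * fderiv ℝ f x (EuclideanSpace.single i 1)) := by
    intro i
    set e : EuclideanSpace ℝ (Fin N) := EuclideanSpace.single i 1 with he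
    have keyi : (fun y => fderiv ℝ (fun z => φ (f z)) y e)
        =ᶠ[nhds x] (fun y => φ' (f y) * fderiv ℝ f y e) := by
      filter_upwards [key] with y hy
      rw [hy]; rfl
    have hA : HasFDerivAt (fun y => φ' (f y)) (φ'' • fderiv ℝ f x) x :=
      hφ''.comp_hasFDerivAt x hfd1.hasFDerivAt
    have hB : DifferentiableAt ℝ (fun y => fderiv ℝ f y e) x := by
      have h1 : ContDiffAt ℝ 1 (fderiv ℝ f) x := hf.fderiv_right (by norm_num)
      exact ((h1.clm_apply contDiffAt_const).differentiableAt one_ne_zero)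
    rw [keyi.fderiv_eq, fderiv_fun_mul hA.differentiableAt hB, hA.fderiv]
    simp only [ContinuousLinearMap.add_apply, ContinuousLinearMap.coe_smul', Pi.smul_apply,
      smul_eq_mul]
    try ring
  unfold lap
  rw [Finset.sum_congr rfl (fun i _ => hterm i)]
  rw [Finset.sum_add_distrib, ← Finset.mul_sum]
  rw [add_comm]
  congr 1
  rw [Finset.mul_sum]
  exact Finset.sum_congr rfl fun i _ => by ring

lemma superharm_construct (Ω : Set (EuclideanSpace ℝ (Fin N)))
    (hΩo : IsOpen Ω) (hne : Ωᶜ.Nonempty) {ρ₀ : ℝ} (hρ₀ : GoodCollar Ω ρ₀)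
    (μ a b s : ℝ) (hs : |s| ≤ 1)
    (hroot : a * (a - 1) + μ = 0)
    (he0 : 0 < b - a) (he2 : b - a ≤ 1/2)
    (hc0 : 0 < -(s * (b * (b - 1) + μ))) :
    ∃ σ, 0 < σ ∧ σ ≤ ρ₀ ∧ σ ≤ 1 ∧
      PosSuperHarmOn Ω μ σ (fun x => bdist Ω x ^ a + s * bdist Ω x ^ b) := by
  obtain ⟨hρ₀pos, hC2, hgrad, M, hM⟩ := hρ₀
  set M₁ : ℝ := max M 1 with hM₁def
  have hM₁pos : 0 < M₁ := lt_of_lt_of_le one_pos (le_max_right _ _)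
  have hM₁ : ∀ x ∈ collar Ω ρ₀, |lap (bdist Ω) x| ≤ M₁ :=
    fun x hx => (hM x hx).trans (le_max_left _ _)
  set c₀ : ℝ := -(s * (b * (b - 1) + μ)) with hc₀def
  set Q : ℝ := c₀ / (M₁ * (|a| + |b| + 1)) with hQdef
  have hden : 0 < M₁ * (|a| + |b| + 1) := by positivity
  have hQ : 0 < Q := div_pos hc0 hden
  refine ⟨min (min ρ₀ 1) (Q^2), by positivity, (min_le_left _ _).trans (min_le_left _ _),
    (min_le_left _ _).trans (min_le_right _ _), ?_, ?_⟩
  · -- SuperHarm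
    constructor
    · -- ContDiffOn
      intro x hx
      have hxρ : x ∈ collar Ω ρ₀ :=
        collar_mono ((min_le_left _ _).trans (min_le_left _ _)) hx
      have ht0 : 0 < bdist Ω x := bdist_pos hΩo hne hx.1
      have hδ : ContDiffAt ℝ 2 (bdist Ω) x :=
        hC2.contDiffAt ((collar_open Ω hΩo ρ₀).mem_nhds hxρ)
      have hφ : ContDiffAt ℝ 2 (fun t : ℝ => t ^ a + s * t ^ b) (bdist Ω x) :=
        (Real.contDiffAt_rpow_const_of_ne ht0.ne').add
          (contDiffAt_const.mul (Real.contDiffAt_rpow_const_of_ne ht0.ne'))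
      exact (hφ.comp x hδ).contDiffWithinAt
    · -- differential inequality
      intro x hx
      have hxρ : x ∈ collar Ω ρ₀ :=
        collar_mono ((min_le_left _ _).trans (min_le_left _ _)) hx
      set t : ℝ := bdist Ω x with htdef
      have ht0 : 0 < t := bdist_pos hΩo hne hx.1
      have ht1 : t < 1 := lt_of_lt_of_le hx.2 ((min_le_left _ _).trans (min_le_right _ _))
      have htQ : t < Q^2 := lt_of_lt_of_le hx.2 (min_le_right _ _)
      have hδ : ContDiffAt ℝ 2 (bdist Ω) x :=
        hC2.contDiffAt ((collar_open Ω hΩo ρ₀).mem_nhds hxρ)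
      -- derivative data for φ
      have hφ' : ∀ᶠ u in nhds t, HasDerivAt (fun t : ℝ => t ^ a + s * t ^ b)
          (a * u ^ (a-1) + s * (b * u ^ (b-1))) u := by
        filter_upwards [isOpen_Ioi.eventually_mem (Set.mem_Ioi.2 ht0)] with u hu
        exact (Real.hasDerivAt_rpow_const (Or.inl (ne_of_gt hu))).add
          ((Real.hasDerivAt_rpow_const (Or.inl (ne_of_gt hu))).const_mul s)
      have hφ'' : HasDerivAt (fun u : ℝ => a * u ^ (a-1) + s * (b * u ^ (b-1)))
          (a * ((a-1) * t ^ (a-2)) + s * (b * ((b-1) * t ^ (b-2)))) t := by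
        have h1 : HasDerivAt (fun u : ℝ => a * u ^ (a-1)) (a * ((a-1) * t ^ (a-1-1))) t :=
          (Real.hasDerivAt_rpow_const (Or.inl ht0.ne')).const_mul a
        have h2 : HasDerivAt (fun u : ℝ => s * (b * u ^ (b-1)))
            (s * (b * ((b-1) * t ^ (b-1-1)))) t :=
          ((Real.hasDerivAt_rpow_const (Or.inl ht0.ne')).const_mul b).const_mul s
        have e1 : a - 1 - 1 = a - 2 := by ring
        have e2 : b - 1 - 1 = b - 2 := by ring
        rw [e1] at h1; rw [e2] at h2
        exact h1.add h2
      have hlap := lap_comp hδ hφ' hφ''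
      rw [sum_fderiv_sq, hgrad x hxρ] at hlap
      set L : ℝ := lap (bdist Ω) x with hLdef
      have hL : |L| ≤ M₁ := hM₁ x hxρ
      -- simplify the lap
      have hlap2 : lap (fun y => bdist Ω y ^ a + s * bdist Ω y ^ b) x
          = (a * ((a-1) * t ^ (a-2)) + s * (b * ((b-1) * t ^ (b-2))))
            + (a * t ^ (a-1) + s * (b * t ^ (b-1))) * L := by
        rw [hlap]; ring
      rw [hlap2]
      -- powers algebra
      have h2r : (t : ℝ)^(2:ℕ) = t^((2:ℕ):ℝ) := (Real.rpow_natCast t 2).symm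
      have hta : t ^ a = t ^ (a-2) * t^(2:ℕ) := by
        rw [h2r, ← Real.rpow_add ht0]; norm_num
      have htb : t ^ b = t ^ (b-2) * t^(2:ℕ) := by
        rw [h2r, ← Real.rpow_add ht0]; norm_num
      have ht2ne : (t:ℝ)^(2:ℕ) ≠ 0 := pow_ne_zero _ ht0.ne'
      have hmu : μ / t^(2:ℕ) * (t ^ a + s * t ^ b)
          = μ * t ^ (a-2) + s * (μ * t ^ (b-2)) := by
        rw [hta, htb]; field_simp
      -- main identity
      have hid : -((a * ((a-1) * t ^ (a-2)) + s * (b * ((b-1) * t ^ (b-2)))))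
          - μ / t^(2:ℕ) * (t ^ a + s * t ^ b)
          = c₀ * t ^ (b-2) - (a * (a-1) + μ) * t ^ (a-2) := by
        rw [hmu, hc₀def]; ring
      -- the gradient-term bound
      have htb2pos : 0 < t ^ (b-2) := Real.rpow_pos_of_pos ht0 _
      have hbound : |(a * t ^ (a-1) + s * (b * t ^ (b-1))) * L| ≤ c₀ * t ^ (b-2) := by
        have hta1 : t ^ (a-1) = t ^ (b-2) * t ^ (a+1-b) := by
          rw [← Real.rpow_add ht0]; ring_nf
        have htb1 : t ^ (b-1) = t ^ (b-2) * t ^ (1:ℝ) := by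
          rw [← Real.rpow_add ht0]; ring_nf
        have hhalf1 : t ^ (a+1-b) ≤ t ^ (1/2 : ℝ) :=
          Real.rpow_le_rpow_of_exponent_ge ht0 ht1.le (by linarith)
        have hhalf2 : t ^ (1:ℝ) ≤ t ^ (1/2 : ℝ) :=
          Real.rpow_le_rpow_of_exponent_ge ht0 ht1.le (by norm_num)
        have hsqQ : t ^ (1/2 : ℝ) ≤ Q := by
          rw [← Real.sqrt_eq_rpow]
          calc Real.sqrt t ≤ Real.sqrt (Q^2) := Real.sqrt_le_sqrt htQ.le
          _ = Q := Real.sqrt_sq hQ.le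
        have hp1 : (0:ℝ) ≤ t ^ (a-1) := (Real.rpow_pos_of_pos ht0 _).le
        have hp2 : (0:ℝ) ≤ t ^ (b-1) := (Real.rpow_pos_of_pos ht0 _).le
        have habs : |(a * t ^ (a-1) + s * (b * t ^ (b-1))) * L|
            ≤ (|a| * t ^ (a-1) + |b| * t ^ (b-1)) * M₁ := by
          rw [abs_mul]
          refine mul_le_mul ?_ hL (abs_nonneg _) ?_
          · calc |a * t ^ (a-1) + s * (b * t ^ (b-1))|
                ≤ |a * t ^ (a-1)| + |s * (b * t ^ (b-1))| := abs_add_le _ _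
              _ ≤ |a| * t ^ (a-1) + |b| * t ^ (b-1) := by
                  rw [abs_mul, abs_mul, abs_mul]
                  rw [abs_of_nonneg hp1, abs_of_nonneg hp2]
                  have h5 : |s| * (|b| * t ^ (b-1)) ≤ 1 * (|b| * t ^ (b-1)) :=
                    mul_le_mul_of_nonneg_right hs
                      (mul_nonneg (abs_nonneg b) hp2)
                  linarith [h5]
          · exact add_nonneg (mul_nonneg (abs_nonneg a) hp1)
              (mul_nonneg (abs_nonneg b) hp2)
        have hstep : (|a| * t ^ (a-1) + |b| * t ^ (b-1)) * M₁
            ≤ (|a| + |b|) * t ^ (1/2:ℝ) * t ^ (b-2) * M₁ := by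
          apply mul_le_mul_of_nonneg_right _ hM₁pos.le
          rw [hta1, htb1]
          have h1 : |a| * (t ^ (b-2) * t ^ (a+1-b)) ≤ |a| * (t ^ (b-2) * t ^ (1/2:ℝ)) :=
            mul_le_mul_of_nonneg_left
              (mul_le_mul_of_nonneg_left hhalf1 htb2pos.le) (abs_nonneg a)
          have h2 : |b| * (t ^ (b-2) * t ^ (1:ℝ)) ≤ |b| * (t ^ (b-2) * t ^ (1/2:ℝ)) :=
            mul_le_mul_of_nonneg_left
              (mul_le_mul_of_nonneg_left hhalf2 htb2pos.le) (abs_nonneg b)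
          have h3 : (|a| + |b|) * t ^ (1/2:ℝ) * t ^ (b-2)
              = |a| * (t ^ (b-2) * t ^ (1/2:ℝ)) + |b| * (t ^ (b-2) * t ^ (1/2:ℝ)) := by
            ring
          linarith [h1, h2]
        have hfin : (|a| + |b|) * t ^ (1/2:ℝ) * t ^ (b-2) * M₁ ≤ c₀ * t ^ (b-2) := by
          have h1 : (|a| + |b|) * t ^ (1/2:ℝ) * M₁ ≤ c₀ := by
            have h2 : (|a| + |b|) * t ^ (1/2:ℝ) * M₁ ≤ (|a| + |b| + 1) * Q * M₁ := by
              have := Real.rpow_nonneg ht0.le (1/2:ℝ)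
              apply mul_le_mul_of_nonneg_right _ hM₁pos.le
              apply mul_le_mul (by linarith) hsqQ (by positivity) (by positivity)
            have h3 : (|a| + |b| + 1) * Q * M₁ = c₀ := by
              rw [hQdef]; field_simp
            linarith
          calc (|a| + |b|) * t ^ (1/2:ℝ) * t ^ (b-2) * M₁
              = ((|a| + |b|) * t ^ (1/2:ℝ) * M₁) * t ^ (b-2) := by ring
            _ ≤ c₀ * t ^ (b-2) := mul_le_mul_of_nonneg_right h1 htb2pos.le
        exact habs.trans (hstep.trans hfin)
      have hroot' : (a * (a-1) + μ) * t ^ (a-2) = 0 := by rw [hroot]; ring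
      have key : -((a * ((a-1) * t ^ (a-2)) + s * (b * ((b-1) * t ^ (b-2))))
            + (a * t ^ (a-1) + s * (b * t ^ (b-1))) * L)
          - μ / t^(2:ℕ) * (t ^ a + s * t ^ b)
          = c₀ * t ^ (b-2) - (a * t ^ (a-1) + s * (b * t ^ (b-1))) * L := by
        linarith [hid, hroot']
      show (0:ℝ) ≤ -((a * ((a-1) * t ^ (a-2)) + s * (b * ((b-1) * t ^ (b-2))))
            + (a * t ^ (a-1) + s * (b * t ^ (b-1))) * L)
          - μ / t^(2:ℕ) * (t ^ a + s * t ^ b)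
      rw [key]
      have hb2 := abs_le.1 hbound
      linarith [hb2.2]
  · -- positivity
    intro x hx
    have ht0 : 0 < bdist Ω x := bdist_pos hΩo hne hx.1
    have ht1 : bdist Ω x < 1 :=
      lt_of_lt_of_le hx.2 ((min_le_left _ _).trans (min_le_right _ _))
    show (0:ℝ) < bdist Ω x ^ a + s * bdist Ω x ^ b
    set t : ℝ := bdist Ω x
    have hsplit : t ^ b = t ^ a * t ^ (b-a) := by
      rw [← Real.rpow_add ht0]; ring_nf
    have hlt : t ^ (b-a) < 1 := Real.rpow_lt_one ht0.le ht1 he0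
    have hs' : -1 ≤ s := neg_le_of_abs_le hs
    have h1 : t ^ a + s * t ^ b ≥ t ^ a - t ^ b := by
      have : -(t^b) ≤ s * t ^ b := by
        nlinarith [Real.rpow_pos_of_pos ht0 b]
      linarith
    have h2 : 0 < t ^ a - t ^ b := by
      rw [hsplit]
      have := Real.rpow_pos_of_pos ht0 a
      nlinarith
    linarith



/-- Let `μ < 1/4`. (a) A small local sub-harmonic `u` of `L_μ` satisfies
`limsup_{δ(x)→0} u(x)/δ(x)^{β₊} < ∞`. (b) A large local sub-harmonic `U` of `L_μ`
satisfies `limsup_{δ(x)→0} U(x)/δ(x)^{β₋} > 0`. -/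
theorem stmt7 {N : ℕ} (hN : 2 ≤ N) (Ω : Set (EuclideanSpace ℝ (Fin N)))
    (hΩo : IsOpen Ω) (hΩne : Ω.Nonempty) (hΩb : Bornology.IsBounded Ω)
    (ρ₀ : ℝ) (hρ₀ : GoodCollar Ω ρ₀) (μ : ℝ) (hμ : μ < 1 / 4) :
    (∀ u : EuclideanSpace ℝ (Fin N) → ℝ, ∀ ρ, 0 < ρ → SubHarm Ω μ (collar Ω ρ) u →
      SmallSubHarm Ω μ u ρ →
      ∃ C : ℝ, ∃ τ, 0 < τ ∧ τ ≤ ρ ∧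
        ∀ x ∈ collar Ω τ, u x / bdist Ω x ^ (1 / 2 + Real.sqrt (1 / 4 - μ)) ≤ C) ∧
    (∀ U : EuclideanSpace ℝ (Fin N) → ℝ, ∀ ρ, 0 < ρ → SubHarm Ω μ (collar Ω ρ) U →
      LargeSubHarm Ω μ U ρ →
      ∃ c, 0 < c ∧ ∀ τ, 0 < τ → τ ≤ ρ →
        ∃ x ∈ collar Ω τ, c ≤ U x / bdist Ω x ^ (1 / 2 - Real.sqrt (1 / 4 - μ))) := by
  have hne : Ωᶜ.Nonempty := compl_nonempty hN hΩb
  set d : ℝ := Real.sqrt (1/4 - μ) with hddef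
  have hd0 : 0 < d := Real.sqrt_pos.2 (by linarith)
  have hd2 : d^2 = 1/4 - μ := Real.sq_sqrt (by linarith)
  constructor
  · -- part (a)
    intro u ρ hρ hsub hsmall
    obtain ⟨σ, hσ0, hσρ₀, hσ1, hPos⟩ :=
      superharm_construct Ω hΩo hne hρ₀ μ (1/2 + d) (1/2 + d + 1/2) (-1)
        (by norm_num) (by linear_combination hd2) (by norm_num) (by norm_num)
        (by nlinarith [hd2, hd0])
    obtain ⟨C, τ, hτ0, hτle, hbound⟩ := hsmall σ hσ0 _ hPos
    refine ⟨max C 0, τ, hτ0, hτle.trans (min_le_left _ _), ?_⟩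
    intro x hx
    have hxσ : x ∈ collar Ω σ := collar_mono (hτle.trans (min_le_right _ _)) hx
    have hhpos := hPos.2 x hxσ
    have ht0 : 0 < bdist Ω x := bdist_pos hΩo hne hx.1
    have hda : (0:ℝ) < bdist Ω x ^ (1/2 + d) := Real.rpow_pos_of_pos ht0 _
    rw [div_le_iff₀ hda]
    have h1 : u x ≤ C * (bdist Ω x ^ (1/2 + d) + (-1) * bdist Ω x ^ (1/2 + d + 1/2)) :=
      (div_le_iff₀ hhpos).1 (hbound x hx)
    have h2 : bdist Ω x ^ (1/2 + d) + (-1) * bdist Ω x ^ (1/2 + d + 1/2)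
        ≤ bdist Ω x ^ (1/2 + d) := by
      have := (Real.rpow_pos_of_pos ht0 (1/2 + d + 1/2)).le
      linarith
    calc u x ≤ C * (bdist Ω x ^ (1/2 + d) + (-1) * bdist Ω x ^ (1/2 + d + 1/2)) := h1
      _ ≤ max C 0 * (bdist Ω x ^ (1/2 + d) + (-1) * bdist Ω x ^ (1/2 + d + 1/2)) :=
          mul_le_mul_of_nonneg_right (le_max_left C 0) hhpos.le
      _ ≤ max C 0 * bdist Ω x ^ (1/2 + d) :=
          mul_le_mul_of_nonneg_left h2 (le_max_right C 0)
  · -- part (b)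
    intro U ρ hρ hsub hlarge
    have hepos : 0 < min d (1/2 : ℝ) := lt_min hd0 (by norm_num)
    have heled : min d (1/2 : ℝ) ≤ d := min_le_left _ _
    obtain ⟨σ, hσ0, hσρ₀, hσ1, hPos⟩ :=
      superharm_construct Ω hΩo hne hρ₀ μ (1/2 - d) (1/2 - d + min d (1/2)) 1
        (by norm_num) (by linear_combination hd2) (by simpa using hepos)
        (by simpa using min_le_right d (1/2 : ℝ))
        (by nlinarith [hd2, hd0, hepos, heled,
          mul_pos hepos (show (0:ℝ) < 2*d - min d (1/2) by linarith)])
    obtain ⟨c, hc0', hc2⟩ := hlarge σ hσ0 _ hPos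
    refine ⟨c, hc0', ?_⟩
    intro τ hτ hτρ
    obtain ⟨x, hx, hcx⟩ := hc2 (min τ σ) (lt_min hτ hσ0)
      (le_min ((min_le_left _ _).trans hτρ) (min_le_right _ _))
    refine ⟨x, collar_mono (min_le_left _ _) hx, ?_⟩
    have hxσ : x ∈ collar Ω σ := collar_mono (min_le_right _ _) hx
    have hhpos := hPos.2 x hxσ
    have ht0 : 0 < bdist Ω x := bdist_pos hΩo hne hx.1
    have hda : (0:ℝ) < bdist Ω x ^ (1/2 - d) := Real.rpow_pos_of_pos ht0 _
    rw [le_div_iff₀ hda]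
    have hU : c * (bdist Ω x ^ (1/2 - d) + 1 * bdist Ω x ^ (1/2 - d + min d (1/2)))
        ≤ U x := (le_div_iff₀ hhpos).1 hcx
    have hge : bdist Ω x ^ (1/2 - d)
        ≤ bdist Ω x ^ (1/2 - d) + 1 * bdist Ω x ^ (1/2 - d + min d (1/2)) := by
      have := (Real.rpow_pos_of_pos ht0 (1/2 - d + min d (1/2))).le
      linarith
    calc c * bdist Ω x ^ (1/2 - d)
        ≤ c * (bdist Ω x ^ (1/2 - d) + 1 * bdist Ω x ^ (1/2 - d + min d (1/2))) :=
          mul_le_mul_of_nonneg_left hge hc0'.le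
      _ ≤ U x := hU
end
end

section
/- Let μ < 1/4 and let h be a positive local super-harmonic of L_μ. Then liminf_{δ(x)→0} h(x)/δ(x)^{β₊} > 0 and liminf_{δ(x)→0} h(x)/δ(x)^{β₋} < ∞. -/
open Set Metric MeasureTheory Real

noncomputable section

namespace S9

variable {N : ℕ}

/-- second fderiv application lemma -/
lemma hasFDerivAt_d1 {f : EuclideanSpace ℝ (Fin N) → ℝ} {x : EuclideanSpace ℝ (Fin N)}
    (hf : ContDiffAt ℝ 2 f x) (v : EuclideanSpace ℝ (Fin N)) :
    HasFDerivAt (fun y => fderiv ℝ f y v)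
      ((ContinuousLinearMap.apply ℝ ℝ v).comp (fderiv ℝ (fderiv ℝ f) x)) x := by
  have h1 : ContDiffAt ℝ 1 (fderiv ℝ f) x := hf.fderiv_right (by norm_num)
  exact (ContinuousLinearMap.apply ℝ ℝ v).hasFDerivAt.comp x
    ((h1.differentiableAt one_ne_zero).hasFDerivAt)

lemma d1_differentiableAt {f : EuclideanSpace ℝ (Fin N) → ℝ} {x : EuclideanSpace ℝ (Fin N)}
    (hf : ContDiffAt ℝ 2 f x) (v : EuclideanSpace ℝ (Fin N)) :
    DifferentiableAt ℝ (fun y => fderiv ℝ f y v) x :=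
  (hasFDerivAt_d1 hf v).differentiableAt

lemma eventually_differentiableAt {f : EuclideanSpace ℝ (Fin N) → ℝ}
    {x : EuclideanSpace ℝ (Fin N)} (hf : ContDiffAt ℝ 2 f x) :
    ∀ᶠ y in nhds x, DifferentiableAt ℝ f y := by
  filter_upwards [hf.eventually (by norm_num)] with y hy
  exact hy.differentiableAt (by norm_num)

lemma lap_add {f g : EuclideanSpace ℝ (Fin N) → ℝ} {x : EuclideanSpace ℝ (Fin N)}
    (hf : ContDiffAt ℝ 2 f x) (hg : ContDiffAt ℝ 2 g x) :
    lap (fun y => f y + g y) x = lap f x + lap g x := by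
  unfold lap
  rw [← Finset.sum_add_distrib]
  refine Finset.sum_congr rfl fun i _ => ?_
  set v := EuclideanSpace.single (𝕜 := ℝ) i (1:ℝ)
  have hev : (fun y => fderiv ℝ (fun z => f z + g z) y v)
      =ᶠ[nhds x] fun y => fderiv ℝ f y v + fderiv ℝ g y v := by
    filter_upwards [eventually_differentiableAt hf, eventually_differentiableAt hg] with y h1 h2
    rw [fderiv_fun_add h1 h2]; rfl
  rw [hev.fderiv_eq, fderiv_fun_add (d1_differentiableAt hf v) (d1_differentiableAt hg v)]
  rfl

lemma lap_const_mul {f : EuclideanSpace ℝ (Fin N) → ℝ} {x : EuclideanSpace ℝ (Fin N)}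
    (hf : ContDiffAt ℝ 2 f x) (c : ℝ) :
    lap (fun y => c * f y) x = c * lap f x := by
  unfold lap
  rw [Finset.mul_sum]
  refine Finset.sum_congr rfl fun i _ => ?_
  set v := EuclideanSpace.single (𝕜 := ℝ) i (1:ℝ)
  have hev : (fun y => fderiv ℝ (fun z => c * f z) y v)
      =ᶠ[nhds x] fun y => c * fderiv ℝ f y v := by
    filter_upwards [eventually_differentiableAt hf] with y h1
    rw [fderiv_const_mul h1]; rfl
  rw [hev.fderiv_eq, fderiv_const_mul (d1_differentiableAt hf v)]
  rfl

lemma lap_sub {f g : EuclideanSpace ℝ (Fin N) → ℝ} {x : EuclideanSpace ℝ (Fin N)}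
    (hf : ContDiffAt ℝ 2 f x) (hg : ContDiffAt ℝ 2 g x) (c : ℝ) :
    lap (fun y => f y - c * g y) x = lap f x - c * lap g x := by
  have h2 : ContDiffAt ℝ 2 (fun y => (-c) * g y) x := hg.const_smul (-c)
  have := lap_add hf h2
  simp only [neg_mul] at this
  have e : (fun y => f y + -(c * g y)) = fun y => f y - c * g y := by
    funext y; ring
  rw [e] at this
  have e2 : (fun y => -(c * g y)) = fun y => (-c) * g y := by funext y; ring
  rw [this, e2, lap_const_mul hg (-c)]; ring

lemma lap_sub' {f g : EuclideanSpace ℝ (Fin N) → ℝ} {x : EuclideanSpace ℝ (Fin N)}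
    (hf : ContDiffAt ℝ 2 f x) (hg : ContDiffAt ℝ 2 g x) :
    lap (fun y => f y - g y) x = lap f x - lap g x := by
  have h2 : (fun y => f y - g y) = fun y => f y - (1:ℝ) * g y := by funext y; ring
  rw [h2, lap_sub hf hg 1, one_mul]

end S9

namespace S9T

/-- 1-D second derivative test at a local max. -/
lemma sd_test {g : ℝ → ℝ} (hg : ContDiffAt ℝ 2 g 0) (hmax : IsLocalMax g 0) :
    deriv (deriv g) 0 ≤ 0 := by
  by_contra hcon
  push_neg at hcon
  set a := deriv (deriv g) 0 with ha
  have h1 : ContDiffAt ℝ 1 (fderiv ℝ g) 0 := hg.fderiv_right (by norm_num)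
  have hde : deriv g = fun t => fderiv ℝ g t 1 := by
    funext t; rw [← fderiv_apply_one_eq_deriv]
  have hd1 : DifferentiableAt ℝ (deriv g) 0 := by
    rw [hde]
    exact ((ContinuousLinearMap.apply ℝ ℝ (1:ℝ)).differentiableAt).comp 0
      (h1.differentiableAt one_ne_zero)
  have hD : HasDerivAt (deriv g) a 0 := hd1.hasDerivAt
  have h0 : deriv g 0 = 0 := hmax.deriv_eq_zero
  rw [hasDerivAt_iff_tendsto_slope] at hD
  have hev1 : ∀ᶠ t in nhdsWithin (0:ℝ) {(0:ℝ)}ᶜ, 0 < slope (deriv g) 0 t :=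
    hD.eventually (Ioi_mem_nhds hcon)
  rw [eventually_nhdsWithin_iff] at hev1
  have hev2 : ∀ᶠ t in nhds (0:ℝ), ContinuousAt g t := by
    filter_upwards [hg.eventually (by norm_num)] with y hy
    exact hy.continuousAt
  have hev3 : ∀ᶠ t in nhds (0:ℝ), g t ≤ g 0 := hmax
  obtain ⟨η, hη, hball⟩ := Metric.eventually_nhds_iff.mp (hev1.and (hev2.and hev3))
  set t0 := η / 2 with ht0
  have ht0pos : 0 < t0 := by positivity
  have hsub : Icc (0:ℝ) t0 ⊆ Metric.ball (0:ℝ) η := by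
    intro t ht
    rw [Metric.mem_ball, Real.dist_eq, sub_zero]
    rw [abs_of_nonneg ht.1]
    linarith [ht.2]
  have hmono : StrictMonoOn g (Icc (0:ℝ) t0) := by
    apply strictMonoOn_of_deriv_pos (convex_Icc _ _)
    · intro t ht
      exact ((hball (hsub ht)).2.1).continuousWithinAt
    · intro t ht
      rw [interior_Icc] at ht
      have htb : dist t (0:ℝ) < η := hsub ⟨le_of_lt ht.1, le_of_lt ht.2⟩
      have := hball htb
      have hslope := this.1 (ne_of_gt ht.1)
      rw [slope_def_field, h0, sub_zero, sub_zero] at hslope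
      have := (div_pos_iff.mp hslope)
      rcases this with ⟨h3, _⟩ | ⟨_, h4⟩
      · exact h3
      · linarith [ht.1]
  have hlt : g 0 < g t0 := hmono (left_mem_Icc.mpr (le_of_lt ht0pos)) (right_mem_Icc.mpr (le_of_lt ht0pos)) ht0pos
  have hball2 := hball (hsub (right_mem_Icc.mpr (le_of_lt ht0pos)))
  linarith [hball2.2.2]


variable {N : ℕ}

lemma line_hasDerivAt (x v : EuclideanSpace ℝ (Fin N)) (t : ℝ) :
    HasDerivAt (fun s : ℝ => x + s • v) v t := by
  have h : HasDerivAt (fun s : ℝ => s • v) ((1:ℝ) • v) t := (hasDerivAt_id t).smul_const v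
  simpa using h.const_add x

/-- Multi-dimensional: lap ≤ 0 at an interior local max of a C² function. -/
lemma lap_nonpos_of_localMax {f : EuclideanSpace ℝ (Fin N) → ℝ}
    {x : EuclideanSpace ℝ (Fin N)} (hf : ContDiffAt ℝ 2 f x) (hmax : IsLocalMax f x) :
    lap f x ≤ 0 := by
  have key : ∀ i : Fin N,
      fderiv ℝ (fun y => fderiv ℝ f y (EuclideanSpace.single i 1)) x
        (EuclideanSpace.single i 1) ≤ 0 := by
    intro i
    set v : EuclideanSpace ℝ (Fin N) := EuclideanSpace.single i 1 with hv
    set A : ℝ → EuclideanSpace ℝ (Fin N) := fun t => x + t • v with hA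
    have hA0 : A 0 = x := by simp [hA]
    have hAcont : Continuous A := by
      apply Continuous.add continuous_const
      exact continuous_id.smul continuous_const
    have hAc : ContDiffAt ℝ 2 A 0 := by
      apply ContDiffAt.add contDiffAt_const
      exact ContDiffAt.smul contDiffAt_id contDiffAt_const
    set g : ℝ → ℝ := fun t => f (A t) with hg
    have hgc : ContDiffAt ℝ 2 g 0 := by
      have := (hA0 ▸ hf).comp 0 hAc
      exact this
    have hgmax : IsLocalMax g 0 := by
      have htend : Filter.Tendsto A (nhds 0) (nhds x) := by
        rw [← hA0]; exact hAcont.continuousAt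
      have hg0 : g 0 = f x := by simp [hg, hA0]
      unfold IsLocalMax IsMaxFilter
      rw [hg0]
      exact htend.eventually hmax
    -- deriv g t = fderiv f (A t) v near 0
    have hev : ∀ᶠ t in nhds (0:ℝ), HasDerivAt g (fderiv ℝ f (A t) v) t := by
      have htend : Filter.Tendsto A (nhds 0) (nhds x) := by
        rw [← hA0]; exact hAcont.continuousAt
      filter_upwards [htend.eventually (S9.eventually_differentiableAt hf)] with t ht
      exact ht.hasFDerivAt.comp_hasDerivAt t (line_hasDerivAt x v t)
    have hderiv_eq : deriv g =ᶠ[nhds (0:ℝ)] fun t => fderiv ℝ f (A t) v := by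
      filter_upwards [hev] with t ht using ht.deriv
    have hd2 : HasDerivAt (fun t => fderiv ℝ f (A t) v)
        (fderiv ℝ (fun y => fderiv ℝ f y v) x v) 0 := by
      have h1 : HasFDerivAt (fun y => fderiv ℝ f y v)
          (fderiv ℝ (fun y => fderiv ℝ f y v) x) x :=
        (S9.d1_differentiableAt hf v).hasFDerivAt
      have h1' : HasFDerivAt (fun y => fderiv ℝ f y v)
          (fderiv ℝ (fun y => fderiv ℝ f y v) x) (A 0) := by rw [hA0]; exact h1
      have := h1'.comp_hasDerivAt 0 (line_hasDerivAt x v 0)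
      exact this
    have : deriv (deriv g) 0 = fderiv ℝ (fun y => fderiv ℝ f y v) x v := by
      rw [hderiv_eq.deriv_eq]
      exact hd2.deriv
    rw [← this]
    exact sd_test hgc hgmax
  exact Finset.sum_nonpos fun i _ => key i

end S9T

namespace S9

variable {N : ℕ} {Ω : Set (EuclideanSpace ℝ (Fin N))}

lemma rpow_hasFDerivAt {y : EuclideanSpace ℝ (Fin N)} (γ : ℝ)
    (hdy : ContDiffAt ℝ 2 (bdist Ω) y) (hpos : 0 < bdist Ω y) :
    HasFDerivAt (fun z => bdist Ω z ^ γ)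
      ((γ * bdist Ω y ^ (γ - 1)) • fderiv ℝ (bdist Ω) y) y := by
  have hd : HasFDerivAt (bdist Ω) (fderiv ℝ (bdist Ω) y) y :=
    (hdy.differentiableAt (by norm_num)).hasFDerivAt
  have hr : HasDerivAt (fun s : ℝ => s ^ γ) (γ * bdist Ω y ^ (γ - 1)) (bdist Ω y) :=
    Real.hasDerivAt_rpow_const (Or.inl (ne_of_gt hpos))
  exact hr.comp_hasFDerivAt y hd

lemma c2at_rpow {y : EuclideanSpace ℝ (Fin N)} (γ : ℝ)
    (hdy : ContDiffAt ℝ 2 (bdist Ω) y) (hpos : 0 < bdist Ω y) :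
    ContDiffAt ℝ 2 (fun z => bdist Ω z ^ γ) y :=
  hdy.rpow_const_of_ne (ne_of_gt hpos)

lemma sum_sq_fderiv {x : EuclideanSpace ℝ (Fin N)} (f : EuclideanSpace ℝ (Fin N) → ℝ)
    (hgrad : ‖gradient f x‖ = 1) :
    ∑ i : Fin N, (fderiv ℝ f x (EuclideanSpace.single i 1))^2 = 1 := by
  have key : ∀ i : Fin N, fderiv ℝ f x (EuclideanSpace.single i 1) = gradient f x i := by
    intro i
    have h1 : fderiv ℝ f x = InnerProductSpace.toDual ℝ _ (gradient f x) := by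
      rw [gradient, LinearIsometryEquiv.apply_symm_apply]
    rw [h1, InnerProductSpace.toDual_apply_apply, EuclideanSpace.inner_single_right]
    simp
  simp_rw [key]
  have h2 : ∑ i : Fin N, (gradient f x i)^2 = ‖gradient f x‖^2 := by
    rw [EuclideanSpace.norm_eq, Real.sq_sqrt (by positivity)]
    congr 1; funext i; rw [Real.norm_eq_abs, sq_abs]
  rw [h2, hgrad]; norm_num

lemma lap_rpow {U : Set (EuclideanSpace ℝ (Fin N))} (hU : IsOpen U)
    {x : EuclideanSpace ℝ (Fin N)} (hxU : x ∈ U)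
    (hd : ContDiffOn ℝ 2 (bdist Ω) U) (hpos : ∀ y ∈ U, 0 < bdist Ω y)
    (hgrad : ‖gradient (bdist Ω) x‖ = 1) (γ : ℝ) :
    lap (fun y => bdist Ω y ^ γ) x
      = γ * (γ - 1) * bdist Ω x ^ (γ - 2) + γ * bdist Ω x ^ (γ - 1) * lap (bdist Ω) x := by
  set d := bdist Ω with hdd
  have hdx : ContDiffAt ℝ 2 d x := hd.contDiffAt (hU.mem_nhds hxU)
  have hUev : ∀ᶠ y in nhds x, y ∈ U := hU.mem_nhds hxU
  have key : ∀ i : Fin N,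
      fderiv ℝ (fun y => fderiv ℝ (fun z => d z ^ γ) y (EuclideanSpace.single i 1)) x
        (EuclideanSpace.single i 1)
      = γ * d x ^ (γ - 1)
          * (fderiv ℝ (fun y => fderiv ℝ d y (EuclideanSpace.single i 1)) x
              (EuclideanSpace.single i 1))
        + γ * (γ - 1) * d x ^ (γ - 2) * (fderiv ℝ d x (EuclideanSpace.single i 1))^2 := by
    intro i
    set v : EuclideanSpace ℝ (Fin N) := EuclideanSpace.single i 1 with hv
    have hev : (fun y => fderiv ℝ (fun z => d z ^ γ) y v)
        =ᶠ[nhds x] fun y => (γ * d y ^ (γ - 1)) * (fderiv ℝ d y v) := by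
      filter_upwards [hUev] with y hy
      rw [(rpow_hasFDerivAt γ (hd.contDiffAt (hU.mem_nhds hy)) (hpos y hy)).fderiv]
      rfl
    rw [hev.fderiv_eq]
    -- derivative of the product
    have hc : HasFDerivAt (fun y => γ * d y ^ (γ - 1))
        (γ • (((γ - 1) * d x ^ (γ - 1 - 1)) • fderiv ℝ d x)) x :=
      (rpow_hasFDerivAt (γ - 1) hdx (hpos x hxU)).const_mul γ
    have hDv : HasFDerivAt (fun y => fderiv ℝ d y v)
        ((ContinuousLinearMap.apply ℝ ℝ v).comp (fderiv ℝ (fderiv ℝ d) x)) x :=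
      hasFDerivAt_d1 hdx v
    have hprod := hc.mul hDv
    rw [show (fun y => γ * d y ^ (γ - 1) * fderiv ℝ d y v) = (fun y => γ * d y ^ (γ - 1)) * (fun y => fderiv ℝ d y v) from rfl, hprod.fderiv]
    have hd1f : fderiv ℝ (fun y => fderiv ℝ d y v) x
        = (ContinuousLinearMap.apply ℝ ℝ v).comp (fderiv ℝ (fderiv ℝ d) x) := hDv.fderiv
    rw [hd1f]
    simp only [ContinuousLinearMap.add_apply, ContinuousLinearMap.smul_apply,
      ContinuousLinearMap.coe_comp', Function.comp_apply, ContinuousLinearMap.apply_apply,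
      smul_eq_mul]
    rw [show γ - 1 - 1 = γ - 2 by ring]
    ring
  unfold lap
  simp_rw [key]
  rw [Finset.sum_add_distrib, ← Finset.mul_sum, ← Finset.mul_sum,
    sum_sq_fderiv d hgrad]
  have hld : ∑ i : Fin N, fderiv ℝ (fun y => fderiv ℝ d y (EuclideanSpace.single i 1)) x
      (EuclideanSpace.single i 1) = lap d x := rfl
  rw [hld]
  ring

end S9

namespace S9

variable {N : ℕ} {Ω : Set (EuclideanSpace ℝ (Fin N))}

lemma bdist_continuous : Continuous (bdist Ω) := continuous_infDist_pt _

lemma bdist_pos (hΩo : IsOpen Ω) (hne : Ωᶜ.Nonempty) {x : EuclideanSpace ℝ (Fin N)}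
    (hx : x ∈ Ω) : 0 < bdist Ω x := by
  rw [bdist]
  exact (hΩo.isClosed_compl.notMem_iff_infDist_pos hne).mp (by simpa using hx)

lemma mem_of_bdist_pos {x : EuclideanSpace ℝ (Fin N)} (hx : 0 < bdist Ω x) : x ∈ Ω := by
  by_contra hc
  have : bdist Ω x = 0 := Metric.infDist_zero_of_mem (by simpa using hc)
  linarith

lemma isCompact_slab (hΩb : Bornology.IsBounded Ω) {ε τ : ℝ} (hε : 0 < ε) :
    IsCompact {x | ε ≤ bdist Ω x ∧ bdist Ω x ≤ τ} := by
  apply Metric.isCompact_of_isClosed_isBounded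
  · have : {x | ε ≤ bdist Ω x ∧ bdist Ω x ≤ τ} = bdist Ω ⁻¹' (Icc ε τ) := rfl
    rw [this]
    exact isClosed_Icc.preimage bdist_continuous
  · apply hΩb.subset
    intro x hx
    exact mem_of_bdist_pos (lt_of_lt_of_le hε hx.1)

lemma isCompact_level (hΩb : Bornology.IsBounded Ω) {t : ℝ} (ht : 0 < t) :
    IsCompact {x | bdist Ω x = t} := by
  apply Metric.isCompact_of_isClosed_isBounded
  · have : {x | bdist Ω x = t} = bdist Ω ⁻¹' {t} := rfl
    rw [this]
    exact IsClosed.preimage bdist_continuous isClosed_singleton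
  · apply hΩb.subset
    intro x hx
    exact mem_of_bdist_pos (by rw [Set.mem_setOf_eq] at hx; rw [hx]; exact ht)

/-- Maximum-principle comparison on the slab `{ε ≤ δ ≤ τ}`. -/
lemma comparison {μ ε τ : ℝ} {V : Set (EuclideanSpace ℝ (Fin N))} (hV : IsOpen V)
    {h φ : EuclideanSpace ℝ (Fin N) → ℝ}
    (hΩb : Bornology.IsBounded Ω)
    (hεpos : 0 < ε)
    (hK : {x | ε ≤ bdist Ω x ∧ bdist Ω x ≤ τ} ⊆ V)
    (hhC2 : ∀ x ∈ V, ContDiffAt ℝ 2 h x)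
    (hhpos : ∀ x ∈ V, 0 < h x)
    (hsuper : ∀ x ∈ V, 0 ≤ -(lap h x) - μ / (bdist Ω x) ^ 2 * h x)
    (hφC2 : ∀ x ∈ V, ContDiffAt ℝ 2 φ x)
    (hφsub : ∀ x ∈ V, ε < bdist Ω x → bdist Ω x < τ →
      -(lap φ x) - μ / (bdist Ω x) ^ 2 * φ x < 0)
    (hbdry : ∀ x, (bdist Ω x = ε ∨ bdist Ω x = τ) → φ x ≤ h x) :
    ∀ x, ε ≤ bdist Ω x → bdist Ω x ≤ τ → φ x ≤ h x := by
  intro x hx1 hx2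
  set K := {x | ε ≤ bdist Ω x ∧ bdist Ω x ≤ τ} with hKdef
  have hxK : x ∈ K := ⟨hx1, hx2⟩
  have hcpt : IsCompact K := isCompact_slab hΩb hεpos
  have hvcont : ContinuousOn (fun y => φ y / h y) K := by
    apply ContinuousOn.div
    · exact fun y hy => ((hφC2 y (hK hy)).continuousAt).continuousWithinAt
    · exact fun y hy => ((hhC2 y (hK hy)).continuousAt).continuousWithinAt
    · exact fun y hy => ne_of_gt (hhpos y (hK hy))
  obtain ⟨x₀, hx₀K, hmax⟩ := hcpt.exists_isMaxOn ⟨x, hxK⟩ hvcont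
  have hx₀V : x₀ ∈ V := hK hx₀K
  set θ := φ x₀ / h x₀ with hθ
  have hhx₀ : 0 < h x₀ := hhpos x₀ hx₀V
  suffices hθ1 : θ ≤ 1 by
    have hvx := hmax hxK
    have : φ x / h x ≤ θ := hvx
    have := this.trans hθ1
    rwa [div_le_one (hhpos x (hK hxK))] at this
  by_contra hcon
  push_neg at hcon
  -- boundary case impossible
  have hbd : ε < bdist Ω x₀ ∧ bdist Ω x₀ < τ := by
    constructor
    · rcases lt_or_eq_of_le hx₀K.1 with hlt | heq
      · exact hlt
      · exfalso
        have := hbdry x₀ (Or.inl heq.symm)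
        rw [hθ, lt_div_iff₀ hhx₀] at hcon
        linarith
    · rcases lt_or_eq_of_le hx₀K.2 with hlt | heq
      · exact hlt
      · exfalso
        have := hbdry x₀ (Or.inr heq)
        rw [hθ, lt_div_iff₀ hhx₀] at hcon
        linarith
  -- interior local max of z
  set z := fun y => φ y - θ * h y with hz
  have hz0 : z x₀ = 0 := by
    rw [hz]; simp only
    rw [hθ]; field_simp; ring
  have hO : IsOpen {y : EuclideanSpace ℝ (Fin N) | ε < bdist Ω y ∧ bdist Ω y < τ} := by
    have : {y : EuclideanSpace ℝ (Fin N) | ε < bdist Ω y ∧ bdist Ω y < τ}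
        = bdist Ω ⁻¹' (Ioo ε τ) := rfl
    rw [this]; exact isOpen_Ioo.preimage bdist_continuous
  have hlocmax : IsLocalMax z x₀ := by
    have hmem : {y : EuclideanSpace ℝ (Fin N) | ε < bdist Ω y ∧ bdist Ω y < τ} ∈ nhds x₀ :=
      hO.mem_nhds hbd
    filter_upwards [hmem] with y hy
    have hyK : y ∈ K := ⟨le_of_lt hy.1, le_of_lt hy.2⟩
    have hvy : φ y / h y ≤ θ := hmax hyK
    have hhy : 0 < h y := hhpos y (hK hyK)
    rw [div_le_iff₀ hhy] at hvy
    rw [hz0, hz]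
    simp only
    linarith [hvy]
  have hzC2 : ContDiffAt ℝ 2 z x₀ := by
    exact (hφC2 x₀ hx₀V).sub (contDiffAt_const.mul (hhC2 x₀ hx₀V))
  have hlapz : lap z x₀ = lap φ x₀ - θ * lap h x₀ :=
    S9.lap_sub (hφC2 x₀ hx₀V) (hhC2 x₀ hx₀V) θ
  have hnonpos : lap z x₀ ≤ 0 := S9T.lap_nonpos_of_localMax hzC2 hlocmax
  -- strict inequality
  have h1 := hsuper x₀ hx₀V
  have h2 := hφsub x₀ hx₀V hbd.1 hbd.2
  have hφx₀ : φ x₀ = θ * h x₀ := by rw [hθ]; field_simp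
  have hθpos : (0:ℝ) < θ := lt_trans one_pos hcon
  have h1' : lap h x₀ ≤ -(μ / bdist Ω x₀ ^ 2) * h x₀ := by linarith
  have h4 := mul_le_mul_of_nonneg_left h1' hθpos.le
  have e : θ * (-(μ / bdist Ω x₀ ^ 2) * h x₀) = -(μ / bdist Ω x₀ ^ 2 * (θ * h x₀)) := by ring
  rw [e] at h4
  rw [hφx₀] at h2
  rw [hlapz] at hnonpos
  linarith

end S9

namespace S9

variable {N : ℕ} {Ω : Set (EuclideanSpace ℝ (Fin N))}

lemma compl_nonempty (hN : 0 < N) (hΩb : Bornology.IsBounded Ω) : Ωᶜ.Nonempty := by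
  obtain ⟨r, hr⟩ := hΩb.subset_closedBall 0
  set i : Fin N := ⟨0, hN⟩
  set y : EuclideanSpace ℝ (Fin N) := EuclideanSpace.single i (|r| + 1)
  refine ⟨y, fun hy => ?_⟩
  have := hr hy
  rw [Metric.mem_closedBall] at this
  have hdist : dist y 0 = |r| + 1 := by
    rw [dist_zero_right]
    have h1 : ‖y‖ = ‖(|r| + 1 : ℝ)‖ := EuclideanSpace.norm_single i _
    rw [h1, Real.norm_eq_abs, abs_of_nonneg (by positivity)]
  rw [hdist] at this
  have : |r| ≤ r - 1 := by linarith
  have h2 := le_abs_self r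
  linarith

lemma exists_bdist_eq (hN : 0 < N) (hΩb : Bornology.IsBounded Ω)
    {x₀ : EuclideanSpace ℝ (Fin N)} {t : ℝ} (ht : 0 < t) (hlt : t ≤ bdist Ω x₀) :
    ∃ x, bdist Ω x = t := by
  obtain ⟨r, hr⟩ := hΩb.subset_closedBall x₀
  set i : Fin N := ⟨0, hN⟩
  set e : EuclideanSpace ℝ (Fin N) := EuclideanSpace.single i 1
  set S : ℝ := |r| + 1
  set g : ℝ → ℝ := fun u => bdist Ω (x₀ + u • e) with hg
  have hgc : Continuous g := by
    apply bdist_continuous.comp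
    exact continuous_const.add (continuous_id.smul continuous_const)
  have hgS : g S = 0 := by
    have hyout : x₀ + S • e ∈ Ωᶜ := by
      intro hy
      have := hr hy
      rw [Metric.mem_closedBall] at this
      have hdist : dist (x₀ + S • e) x₀ = S := by
        rw [dist_eq_norm]
        simp only [add_sub_cancel_left]
        rw [norm_smul, Real.norm_eq_abs]
        have h1 : ‖e‖ = 1 := by
          rw [show e = EuclideanSpace.single i (1:ℝ) from rfl, EuclideanSpace.norm_single]
          norm_num
        rw [h1, mul_one, abs_of_nonneg (by positivity : (0:ℝ) ≤ |r| + 1)]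
      rw [hdist] at this
      have h2 := le_abs_self r
      simp only [S] at this
      linarith
    exact Metric.infDist_zero_of_mem hyout
  have hg0 : t ≤ g 0 := by
    have : g 0 = bdist Ω x₀ := by simp [hg]
    rw [this]; exact hlt
  have hS : (0:ℝ) ≤ S := by positivity
  have := intermediate_value_Icc' hS hgc.continuousOn
  have hmem : t ∈ Icc (g S) (g 0) := by
    rw [hgS]; exact ⟨le_of_lt ht, hg0⟩
  obtain ⟨u, _, hu⟩ := this hmem
  exact ⟨x₀ + u • e, hu⟩

end S9

namespace S9

variable {N : ℕ} {Ω : Set (EuclideanSpace ℝ (Fin N))}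

lemma Lmu_rpow {μ s : ℝ} (hs2 : s^2 = 1/4 - μ) {U : Set (EuclideanSpace ℝ (Fin N))}
    (hU : IsOpen U) {x : EuclideanSpace ℝ (Fin N)} (hxU : x ∈ U)
    (hd : ContDiffOn ℝ 2 (bdist Ω) U) (hpos : ∀ y ∈ U, 0 < bdist Ω y)
    (hgrad : ‖gradient (bdist Ω) x‖ = 1) (γ : ℝ) :
    -(lap (fun y => bdist Ω y ^ γ) x) - μ / (bdist Ω x) ^ 2 * (bdist Ω x ^ γ)
      = (s^2 - (γ - 1/2)^2) * bdist Ω x ^ (γ - 2)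
        - γ * bdist Ω x ^ (γ - 1) * lap (bdist Ω) x := by
  have hδ : 0 < bdist Ω x := hpos x hxU
  rw [lap_rpow hU hxU hd hpos hgrad γ]
  have hdiv : μ / (bdist Ω x) ^ 2 * (bdist Ω x ^ γ) = μ * bdist Ω x ^ (γ - 2) := by
    rw [div_mul_eq_mul_div, mul_div_assoc]
    congr 1
    rw [← Real.rpow_natCast (bdist Ω x) 2, ← Real.rpow_sub hδ]
    norm_num
  rw [hdiv]
  have hμeq : μ = 1/4 - s^2 := by linarith
  rw [hμeq]
  ring

lemma est1 {P Q t τ u v M D K s β c0 : ℝ} (hP : 0 < P) (hQ : 0 < Q) (ht : 0 ≤ t)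
    (htτ : t ≤ τ) (hu : 0 ≤ u) (huv : u ≤ v) (hM : 0 < M) (hD : |D| ≤ M) (hK : 0 ≤ K)
    (hβ : 0 < β) (hs : 0 < s) (hc5 : M * τ ≤ 2 * s^2)
    (hc6 : β * M * v + (1 + s) * M * τ ≤ 1/8) (hc0 : 0 < c0) :
    c0 * (-(β * (P * u) * D) - (1/4 + s) * P - (1 + s) * (P * t) * D
      - K * (s^2 * Q - 1/2 * (Q * t) * D)) < 0 := by
  obtain ⟨hD1, hD2⟩ := abs_le.mp hD
  apply mul_neg_of_pos_of_neg hc0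
  have e1 : -(β * (P * u) * D) ≤ β * (P * u) * M := by
    have h := mul_le_mul_of_nonneg_left (by linarith : -D ≤ M)
      (mul_nonneg hβ.le (mul_nonneg hP.le hu))
    linarith [h]
  have e2 : -((1 + s) * (P * t) * D) ≤ (1 + s) * (P * t) * M := by
    have h := mul_le_mul_of_nonneg_left (by linarith : -D ≤ M)
      (mul_nonneg (by linarith : (0:ℝ) ≤ 1 + s) (mul_nonneg hP.le ht))
    linarith [h]
  have e3 : -(K * (s^2 * Q - 1/2 * (Q * t) * D)) ≤ 0 := by
    have hQt : Q * t ≤ Q * τ := mul_le_mul_of_nonneg_left htτ hQ.le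
    have h1 : 1/2 * (Q * t) * D ≤ 1/2 * (Q * t) * M := by
      have := mul_le_mul_of_nonneg_left hD2 (by positivity : (0:ℝ) ≤ 1/2 * (Q * t))
      linarith [this]
    have h2 : 1/2 * (Q * t) * M ≤ 1/2 * (Q * τ) * M :=
      mul_le_mul_of_nonneg_right (by linarith) hM.le
    have h3 : 1/2 * (Q * τ) * M ≤ Q * s^2 := by
      have := mul_le_mul_of_nonneg_left hc5 hQ.le
      linarith [this]
    have h4 : 0 ≤ s^2 * Q - 1/2 * (Q * t) * D := by linarith
    have := mul_nonneg hK h4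
    linarith
  have e4 : β * (P * u) * M ≤ β * M * v * P := by
    have h := mul_le_mul_of_nonneg_left (mul_le_mul_of_nonneg_left huv hP.le)
      (mul_nonneg hβ.le hM.le)
    linarith [h]
  have e5 : (1 + s) * (P * t) * M ≤ (1 + s) * M * τ * P := by
    have h := mul_le_mul_of_nonneg_left (mul_le_mul_of_nonneg_left htτ hP.le)
      (mul_nonneg (by linarith : (0:ℝ) ≤ 1 + s) hM.le)
    linarith [h]
  have e6 : β * M * v * P + (1 + s) * M * τ * P - (1/4 + s) * P ≤ P * (-(1/8) - s) := by
    have h := mul_le_mul_of_nonneg_left hc6 hP.le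
    linarith [h]
  have e7 : P * (-(1/8) - s) < 0 := mul_neg_of_pos_of_neg hP (by linarith)
  linarith

lemma est2 {P Q t τ w z M D B s α βm g₂ C : ℝ} (hP : 0 < P) (hQ : 0 < Q) (ht : 0 ≤ t)
    (htτ : t ≤ τ) (hw : 0 ≤ w) (hwz : w ≤ z) (hM : 0 < M) (hD : |D| ≤ M) (hB : 0 ≤ B)
    (hs : 0 < s) (hg₂ : 0 < g₂) (hc5 : M * τ ≤ 2 * s^2)
    (hc6 : |βm| * M * z + |βm + α| * M * τ ≤ g₂ / 2) (hC : 0 < C) :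
    C * (-(βm * (P * w) * D) - (g₂ * P - (βm + α) * (P * t) * D)
      - B * (s^2 * Q - 1/2 * (Q * t) * D)) < 0 := by
  obtain ⟨hD1, hD2⟩ := abs_le.mp hD
  apply mul_neg_of_pos_of_neg hC
  have habs1 : -(βm * D) ≤ |βm| * M := by
    have h2 : |βm * D| ≤ |βm| * M :=
      (abs_mul βm D) ▸ mul_le_mul_of_nonneg_left hD (abs_nonneg βm)
    have := neg_abs_le (βm * D)
    linarith
  have habs2 : (βm + α) * D ≤ |βm + α| * M := by
    have h2 : |(βm + α) * D| ≤ |βm + α| * M :=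
      (abs_mul (βm + α) D) ▸ mul_le_mul_of_nonneg_left hD (abs_nonneg (βm + α))
    have := le_abs_self ((βm + α) * D)
    linarith
  have e1 : -(βm * (P * w) * D) ≤ |βm| * M * (P * w) := by
    have := mul_le_mul_of_nonneg_right habs1 (mul_nonneg hP.le hw)
    linarith [this]
  have e2 : (βm + α) * (P * t) * D ≤ |βm + α| * M * (P * t) := by
    have := mul_le_mul_of_nonneg_right habs2 (mul_nonneg hP.le ht)
    linarith [this]
  have e3 : -(B * (s^2 * Q - 1/2 * (Q * t) * D)) ≤ 0 := by
    have hQt : Q * t ≤ Q * τ := mul_le_mul_of_nonneg_left htτ hQ.le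
    have h1 : 1/2 * (Q * t) * D ≤ 1/2 * (Q * t) * M := by
      have := mul_le_mul_of_nonneg_left hD2 (by positivity : (0:ℝ) ≤ 1/2 * (Q * t))
      linarith [this]
    have h2 : 1/2 * (Q * t) * M ≤ 1/2 * (Q * τ) * M :=
      mul_le_mul_of_nonneg_right (by linarith) hM.le
    have h3 : 1/2 * (Q * τ) * M ≤ Q * s^2 := by
      have := mul_le_mul_of_nonneg_left hc5 hQ.le
      linarith [this]
    have h4 : 0 ≤ s^2 * Q - 1/2 * (Q * t) * D := by linarith
    have := mul_nonneg hB h4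
    linarith
  have e4 : |βm| * M * (P * w) ≤ |βm| * M * z * P := by
    have h := mul_le_mul_of_nonneg_left (mul_le_mul_of_nonneg_left hwz hP.le)
      (mul_nonneg (abs_nonneg βm) hM.le)
    linarith [h]
  have e5 : |βm + α| * M * (P * t) ≤ |βm + α| * M * τ * P := by
    have h := mul_le_mul_of_nonneg_left (mul_le_mul_of_nonneg_left htτ hP.le)
      (mul_nonneg (abs_nonneg (βm + α)) hM.le)
    linarith [h]
  have e6 : |βm| * M * z * P + |βm + α| * M * τ * P - g₂ * P ≤ P * (-(g₂ / 2)) := by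
    have h := mul_le_mul_of_nonneg_left hc6 hP.le
    linarith [h]
  have e7 : P * (-(g₂ / 2)) < 0 := mul_neg_of_pos_of_neg hP (by linarith)
  linarith

end S9


set_option maxHeartbeats 2000000 in
/-- Let `μ < 1/4` and let `h` be a positive local super-harmonic of
`L_μ` (on `Ω_ρ`). Then `liminf_{δ(x)→0} h(x)/δ(x)^{β₊} > 0` and
`liminf_{δ(x)→0} h(x)/δ(x)^{β₋} < ∞`. -/
theorem stmt9 {N : ℕ} (hN : 2 ≤ N) (Ω : Set (EuclideanSpace ℝ (Fin N)))
    (hΩo : IsOpen Ω) (hΩne : Ω.Nonempty) (hΩb : Bornology.IsBounded Ω)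
    (ρ₀ : ℝ) (hρ₀ : GoodCollar Ω ρ₀) (μ : ℝ) (hμ : μ < 1 / 4)
    (h : EuclideanSpace ℝ (Fin N) → ℝ) (ρ : ℝ) (hρ : 0 < ρ)
    (hh : PosSuperHarmOn Ω μ ρ h) :
    (∃ c, 0 < c ∧ ∃ τ, 0 < τ ∧ τ ≤ ρ ∧
      ∀ x ∈ collar Ω τ, c ≤ h x / bdist Ω x ^ (1 / 2 + Real.sqrt (1 / 4 - μ))) ∧
    (∃ C : ℝ, ∀ τ, 0 < τ → τ ≤ ρ →
      ∃ x ∈ collar Ω τ, h x / bdist Ω x ^ (1 / 2 - Real.sqrt (1 / 4 - μ)) ≤ C) := by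
  obtain ⟨hρ₀pos, hdC2, hgradAll, M0, hM0⟩ := hρ₀
  obtain ⟨⟨hhC2, hsuperh⟩, hhpos⟩ := hh
  have hNpos : 0 < N := by omega
  have hcne : Ωᶜ.Nonempty := S9.compl_nonempty hNpos hΩb
  have hspos' : 0 < Real.sqrt (1 / 4 - μ) := Real.sqrt_pos.mpr (by linarith)
  set s := Real.sqrt (1 / 4 - μ) with hsdef
  have hspos : 0 < s := hspos'
  have hs2 : s ^ 2 = 1 / 4 - μ := Real.sq_sqrt (by linarith)
  set M := |M0| + 1 with hMdef
  have hMpos : 0 < M := by positivity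
  have hM : ∀ x ∈ collar Ω ρ₀, |lap (bdist Ω) x| ≤ M := by
    intro x hx
    have h1 := hM0 x hx
    have h2 := le_abs_self M0
    rw [hMdef]; linarith
  set ρ' := min ρ ρ₀ with hρ'def
  have hρ'pos : 0 < ρ' := lt_min hρ hρ₀pos
  have hcolop : ∀ r : ℝ, IsOpen (collar Ω r) := by
    intro r
    have he : collar Ω r = Ω ∩ bdist Ω ⁻¹' (Iio r) := rfl
    rw [he]; exact hΩo.inter (isOpen_Iio.preimage S9.bdist_continuous)
  set V := collar Ω ρ' with hVdef
  have hVopen : IsOpen V := hcolop ρ'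
  have hVsubρ : V ⊆ collar Ω ρ := fun x hx => ⟨hx.1, lt_of_lt_of_le hx.2 (min_le_left _ _)⟩
  have hVsubρ₀ : V ⊆ collar Ω ρ₀ := fun x hx => ⟨hx.1, lt_of_lt_of_le hx.2 (min_le_right _ _)⟩
  have hVpos : ∀ y ∈ V, 0 < bdist Ω y := fun y hy => S9.bdist_pos hΩo hcne hy.1
  have hdC2V : ContDiffOn ℝ 2 (bdist Ω) V := hdC2.mono hVsubρ₀
  have hhC2V : ∀ x ∈ V, ContDiffAt ℝ 2 h x := fun x hx =>
    hhC2.contDiffAt ((hcolop ρ).mem_nhds (hVsubρ hx))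
  have hhposV : ∀ x ∈ V, 0 < h x := fun x hx => hhpos x (hVsubρ hx)
  have hsuperV : ∀ x ∈ V, 0 ≤ -(lap h x) - μ / bdist Ω x ^ 2 * h x :=
    fun x hx => hsuperh x (hVsubρ hx)
  obtain ⟨x₀, hx₀⟩ := hΩne
  have hδx₀ : 0 < bdist Ω x₀ := S9.bdist_pos hΩo hcne hx₀
  have htendid : Filter.Tendsto (fun τ : ℝ => τ) (nhdsWithin 0 (Ioi 0)) (nhds 0) :=
    Filter.tendsto_id.mono_right nhdsWithin_le_nhds
  have htrpow : ∀ p : ℝ, 0 < p →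
      Filter.Tendsto (fun τ : ℝ => τ ^ p) (nhdsWithin 0 (Ioi 0)) (nhds 0) := by
    intro p hp
    have hc : ContinuousAt (fun τ : ℝ => τ ^ p) 0 :=
      Real.continuousAt_rpow_const 0 p (Or.inr hp.le)
    have h0 : (0:ℝ) ^ p = 0 := Real.zero_rpow (ne_of_gt hp)
    have := hc.tendsto
    rw [h0] at this
    exact this.mono_left nhdsWithin_le_nhds
  constructor
  · -- Part 1
    set β := 1 / 2 + s with hβdef
    have hβpos : 0 < β := by rw [hβdef]; linarith
    -- choose τ
    have hev : ∀ᶠ τ in nhdsWithin (0:ℝ) (Ioi 0), (τ ≤ ρ ∧ τ < ρ' ∧ τ ≤ 1 ∧ M * τ ≤ 2 * s ^ 2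
        ∧ β * M * τ ^ ((1:ℝ)/2) + (1 + s) * M * τ ≤ 1/8 ∧ τ < bdist Ω x₀) := by
      have e1 := htendid.eventually (Iic_mem_nhds hρ)
      have e2 := htendid.eventually (Iio_mem_nhds hρ'pos)
      have e3 := htendid.eventually (Iic_mem_nhds (by norm_num : (0:ℝ) < 1))
      have e4 : ∀ᶠ τ in nhdsWithin (0:ℝ) (Ioi 0), M * τ ≤ 2 * s ^ 2 := by
        have := htendid.const_mul M
        rw [mul_zero] at this
        have := this.eventually (Iic_mem_nhds (by positivity : (0:ℝ) < 2 * s ^ 2))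
        filter_upwards [this] with τ hτ using hτ
      have e5 : ∀ᶠ τ in nhdsWithin (0:ℝ) (Ioi 0),
          β * M * τ ^ ((1:ℝ)/2) + (1 + s) * M * τ ≤ 1/8 := by
        have hF : Filter.Tendsto (fun τ : ℝ => β * M * τ ^ ((1:ℝ)/2) + (1 + s) * M * τ)
            (nhdsWithin 0 (Ioi 0)) (nhds (β * M * 0 + (1 + s) * M * 0)) :=
          ((htrpow ((1:ℝ)/2) (by norm_num)).const_mul (β * M)).add (htendid.const_mul ((1 + s) * M))
        rw [mul_zero, mul_zero, add_zero] at hF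
        have := hF.eventually (Iic_mem_nhds (by norm_num : (0:ℝ) < 1/8))
        filter_upwards [this] with τ hτ using hτ
      have e6 := htendid.eventually (Iio_mem_nhds hδx₀)
      filter_upwards [e1, e2, e3, e4, e5, e6] with τ h1 h2 h3 h4 h5 h6
      exact ⟨h1, h2, h3, h4, h5, h6⟩
    obtain ⟨τ, ⟨hτρ, hτρ', hτ1, hτc5, hτc6, hτx₀⟩, hτIoi⟩ :=
      (hev.and eventually_mem_nhdsWithin).exists
    have hτpos : 0 < τ := hτIoi
    have hslabV : ∀ {x : EuclideanSpace ℝ (Fin N)}, 0 < bdist Ω x → bdist Ω x ≤ τ → x ∈ V :=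
      fun {x} h1 h2 => ⟨S9.mem_of_bdist_pos h1, lt_of_le_of_lt h2 hτρ'⟩
    -- the minimum of h on the level set
    obtain ⟨xm0, hxm0⟩ := S9.exists_bdist_eq hNpos hΩb hτpos (le_of_lt hτx₀)
    have hLsubV : {x | bdist Ω x = τ} ⊆ V := fun x hx =>
      hslabV (hx ▸ hτpos) (le_of_eq hx)
    have hLcont : ContinuousOn h {x | bdist Ω x = τ} := fun x hx =>
      ((hhC2V x (hLsubV hx)).continuousAt).continuousWithinAt
    obtain ⟨xm, hxmL, hxmmin⟩ :=
      (S9.isCompact_level hΩb hτpos).exists_isMinOn ⟨xm0, hxm0⟩ hLcont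
    set m := h xm with hmdef
    have hmpos : 0 < m := hhposV xm (hLsubV hxmL)
    have hτβpos : (0:ℝ) < τ ^ β := Real.rpow_pos_of_pos hτpos β
    set c0 := m / (2 * τ ^ β) with hc0def
    have hc0pos : 0 < c0 := by positivity
    have main : ∀ x ∈ collar Ω τ, c0 * (bdist Ω x ^ β + bdist Ω x ^ (1 + s)) ≤ h x := by
      intro x hx
      have hδx : 0 < bdist Ω x := S9.bdist_pos hΩo hcne hx.1
      have hδxτ : bdist Ω x < τ := hx.2
      have hcomp : ∀ ε ∈ Ioo (0:ℝ) (bdist Ω x),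
          c0 * (bdist Ω x ^ β + bdist Ω x ^ (1 + s))
            - c0 * ((1 + ε ^ ((1:ℝ)/2)) * ε ^ s) * bdist Ω x ^ ((1:ℝ)/2) ≤ h x := by
        intro ε hε
        have hεpos : 0 < ε := hε.1
        have hετ : ε < τ := lt_trans hε.2 hδxτ
        set K := (1 + ε ^ ((1:ℝ)/2)) * ε ^ s with hKdef
        have hK0 : 0 ≤ K := by positivity
        set φf : EuclideanSpace ℝ (Fin N) → ℝ := fun y =>
          c0 * ((bdist Ω y ^ β + bdist Ω y ^ (1 + s)) - K * bdist Ω y ^ ((1:ℝ)/2)) with hφfdef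
        have hφC2 : ∀ y ∈ V, ContDiffAt ℝ 2 φf y := by
          intro y hy
          have hdy : ContDiffAt ℝ 2 (bdist Ω) y := hdC2V.contDiffAt (hVopen.mem_nhds hy)
          have hpy := hVpos y hy
          exact contDiffAt_const.mul
            (((S9.c2at_rpow β hdy hpy).add (S9.c2at_rpow (1 + s) hdy hpy)).sub
              (contDiffAt_const.mul (S9.c2at_rpow ((1:ℝ)/2) hdy hpy)))
        have hφsub : ∀ y ∈ V, ε < bdist Ω y → bdist Ω y < τ →
            -(lap φf y) - μ / bdist Ω y ^ 2 * φf y < 0 := by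
          intro y hy hyε hyτ
          have hdy : ContDiffAt ℝ 2 (bdist Ω) y := hdC2V.contDiffAt (hVopen.mem_nhds hy)
          have hpy : 0 < bdist Ω y := hVpos y hy
          have hgrady : ‖gradient (bdist Ω) y‖ = 1 := hgradAll y (hVsubρ₀ hy)
          have c1 := S9.c2at_rpow (Ω := Ω) β hdy hpy
          have c2 := S9.c2at_rpow (Ω := Ω) (1 + s) hdy hpy
          have c3 := S9.c2at_rpow (Ω := Ω) ((1:ℝ)/2) hdy hpy
          have hadd : lap (fun z => bdist Ω z ^ β + bdist Ω z ^ (1 + s)) y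
              = lap (fun z => bdist Ω z ^ β) y + lap (fun z => bdist Ω z ^ (1 + s)) y :=
            S9.lap_add c1 c2
          have hsub : lap (fun z => (bdist Ω z ^ β + bdist Ω z ^ (1 + s))
                - K * bdist Ω z ^ ((1:ℝ)/2)) y
              = lap (fun z => bdist Ω z ^ β + bdist Ω z ^ (1 + s)) y
                - K * lap (fun z => bdist Ω z ^ ((1:ℝ)/2)) y :=
            S9.lap_sub (c1.add c2) c3 K
          have hcm : lap φf y = c0 * lap (fun z => (bdist Ω z ^ β + bdist Ω z ^ (1 + s))
                - K * bdist Ω z ^ ((1:ℝ)/2)) y :=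
            S9.lap_const_mul ((c1.add c2).sub (contDiffAt_const.mul c3)) c0
          have hL1 := S9.Lmu_rpow hs2 hVopen hy hdC2V hVpos hgrady β
          have hL2 := S9.Lmu_rpow hs2 hVopen hy hdC2V hVpos hgrady (1 + s)
          have hL3 := S9.Lmu_rpow hs2 hVopen hy hdC2V hVpos hgrady ((1:ℝ)/2)
          set t := bdist Ω y with htdef
          set D := lap (bdist Ω) y with hDdef
          have r1 : t ^ (β - 1) = t ^ (s - 1) * t ^ ((1:ℝ)/2) := by
            rw [← Real.rpow_add hpy]; congr 1; rw [hβdef]; ring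
          have r3 : t ^ ((1:ℝ) + s - 1) = t ^ (s - 1) * t := by
            rw [show (1:ℝ) + s - 1 = (s - 1) + 1 by ring, Real.rpow_add hpy, Real.rpow_one]
          have r5 : t ^ ((1:ℝ)/2 - 1) = t ^ (-(3:ℝ)/2) * t := by
            rw [show (1:ℝ)/2 - 1 = (-(3:ℝ)/2) + 1 by norm_num, Real.rpow_add hpy, Real.rpow_one]
          have hL1' : -(lap (fun z => bdist Ω z ^ β) y) - μ / t ^ 2 * t ^ β
              = -(β * (t ^ (s - 1) * t ^ ((1:ℝ)/2)) * D) := by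
            rw [hL1, r1, show s ^ 2 - (β - 1/2) ^ 2 = 0 by rw [hβdef]; ring]
            ring
          have hL2' : -(lap (fun z => bdist Ω z ^ (1 + s)) y) - μ / t ^ 2 * t ^ (1 + s)
              = -((1/4 + s) * t ^ (s - 1)) - (1 + s) * (t ^ (s - 1) * t) * D := by
            rw [hL2, show (1:ℝ) + s - 2 = s - 1 by ring, r3]
            ring
          have hL3' : -(lap (fun z => bdist Ω z ^ ((1:ℝ)/2)) y) - μ / t ^ 2 * t ^ ((1:ℝ)/2)
              = s ^ 2 * t ^ (-(3:ℝ)/2) - 1/2 * (t ^ (-(3:ℝ)/2) * t) * D := by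
            rw [hL3, show (1:ℝ)/2 - 2 = -(3:ℝ)/2 by norm_num, r5]
            ring
          have hkey : -(lap φf y) - μ / t ^ 2 * φf y
              = c0 * ((-(lap (fun z => bdist Ω z ^ β) y) - μ / t ^ 2 * t ^ β)
                + (-(lap (fun z => bdist Ω z ^ (1 + s)) y) - μ / t ^ 2 * t ^ (1 + s))
                - K * (-(lap (fun z => bdist Ω z ^ ((1:ℝ)/2)) y) - μ / t ^ 2 * t ^ ((1:ℝ)/2))) := by
            have hφfy : φf y = c0 * ((t ^ β + t ^ (1 + s)) - K * t ^ ((1:ℝ)/2)) := rfl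
            rw [hφfy, hcm, hsub, hadd]
            ring
          rw [hkey, hL1', hL2', hL3']
          have hest := S9.est1 (Real.rpow_pos_of_pos hpy (s - 1))
            (Real.rpow_pos_of_pos hpy (-(3:ℝ)/2)) hpy.le hyτ.le
            (Real.rpow_nonneg hpy.le ((1:ℝ)/2))
            (Real.rpow_le_rpow hpy.le hyτ.le (by norm_num : (0:ℝ) ≤ (1:ℝ)/2))
            hMpos (hM y (hVsubρ₀ hy)) hK0 hβpos hspos hτc5 hτc6 hc0pos
          linarith [hest]
        have hbdry : ∀ y, (bdist Ω y = ε ∨ bdist Ω y = τ) → φf y ≤ h y := by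
          intro y hyb
          rcases hyb with hyε | hyτ
          · have hyV : y ∈ V := hslabV (hyε ▸ hεpos) (hyε ▸ hετ.le)
            have hzero : φf y = 0 := by
              have e1 : ε ^ β = ε ^ s * ε ^ ((1:ℝ)/2) := by
                rw [← Real.rpow_add hεpos]; congr 1; rw [hβdef]; ring
              have e2 : ε ^ ((1:ℝ) + s) = ε ^ s * ε ^ ((1:ℝ)/2) * ε ^ ((1:ℝ)/2) := by
                rw [← Real.rpow_add hεpos, ← Real.rpow_add hεpos]; congr 1; ring
              have hφfy : φf y = c0 * ((bdist Ω y ^ β + bdist Ω y ^ (1 + s))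
                  - K * bdist Ω y ^ ((1:ℝ)/2)) := rfl
              rw [hφfy, hyε, hKdef, e1, e2]
              ring
            rw [hzero]
            exact (hhposV y hyV).le
          · have hyV : y ∈ V := hslabV (hyτ ▸ hτpos) (le_of_eq hyτ)
            have hmy : m ≤ h y := hxmmin hyτ
            have hτ1s : τ ^ ((1:ℝ) + s) ≤ τ ^ β := by
              apply Real.rpow_le_rpow_of_exponent_ge hτpos hτ1
              rw [hβdef]; linarith
            have hKnn : 0 ≤ K * τ ^ ((1:ℝ)/2) :=
              mul_nonneg hK0 (Real.rpow_nonneg hτpos.le _)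
            have hφfy : φf y = c0 * ((τ ^ β + τ ^ (1 + s)) - K * τ ^ ((1:ℝ)/2)) := by
              have : φf y = c0 * ((bdist Ω y ^ β + bdist Ω y ^ (1 + s))
                  - K * bdist Ω y ^ ((1:ℝ)/2)) := rfl
              rw [this, hyτ]
            have hc0m : c0 * (2 * τ ^ β) = m := by
              rw [hc0def]; field_simp
            have step : φf y ≤ c0 * (2 * τ ^ β) := by
              rw [hφfy]
              apply mul_le_mul_of_nonneg_left _ hc0pos.le
              linarith
            linarith
        have hres := S9.comparison (Ω := Ω) (μ := μ) (V := V) hVopen hΩb hεpos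
          (fun y hy => hslabV (lt_of_lt_of_le hεpos hy.1) hy.2)
          hhC2V hhposV hsuperV hφC2 hφsub hbdry
        have := hres x (le_of_lt hε.2) (le_of_lt hδxτ)
        have hφfx : φf x = c0 * ((bdist Ω x ^ β + bdist Ω x ^ (1 + s))
            - K * bdist Ω x ^ ((1:ℝ)/2)) := rfl
        rw [hφfx] at this
        linarith [this]
      -- pass to the limit ε → 0⁺
      have hT : Filter.Tendsto (fun ε : ℝ =>
          c0 * (bdist Ω x ^ β + bdist Ω x ^ (1 + s))
            - c0 * ((1 + ε ^ ((1:ℝ)/2)) * ε ^ s) * bdist Ω x ^ ((1:ℝ)/2))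
          (nhdsWithin 0 (Ioi 0))
          (nhds (c0 * (bdist Ω x ^ β + bdist Ω x ^ (1 + s))
            - c0 * ((1 + 0) * 0) * bdist Ω x ^ ((1:ℝ)/2))) := by
        apply Filter.Tendsto.sub tendsto_const_nhds
        apply Filter.Tendsto.mul_const
        apply Filter.Tendsto.const_mul
        exact (tendsto_const_nhds.add (htrpow ((1:ℝ)/2) (by norm_num))).mul (htrpow s hspos)
      rw [show c0 * (bdist Ω x ^ β + bdist Ω x ^ (1 + s))
          - c0 * ((1 + 0) * 0) * bdist Ω x ^ ((1:ℝ)/2)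
          = c0 * (bdist Ω x ^ β + bdist Ω x ^ (1 + s)) by ring] at hT
      exact le_of_tendsto hT (Filter.eventually_of_mem
        (Ioo_mem_nhdsGT_of_mem ⟨le_refl 0, hδx⟩) hcomp)
    refine ⟨c0, hc0pos, τ, hτpos, hτρ, ?_⟩
    intro x hx
    have hδx : 0 < bdist Ω x := S9.bdist_pos hΩo hcne hx.1
    have h1 := main x hx
    have h2 : 0 ≤ c0 * bdist Ω x ^ (1 + s) :=
      mul_nonneg hc0pos.le (Real.rpow_nonneg hδx.le _)
    rw [le_div_iff₀ (Real.rpow_pos_of_pos hδx β)]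
    nlinarith [h1, h2]
  · -- Part 2
    set βm := 1 / 2 - s with hβmdef
    set α := min (1/2 : ℝ) s with hαdef
    have hαpos : 0 < α := lt_min (by norm_num) hspos
    have hα12 : α ≤ 1/2 := min_le_left _ _
    have hαs : α ≤ s := min_le_right _ _
    have hg₂pos : 0 < s ^ 2 - (α - s) ^ 2 := by nlinarith [hαpos, hαs, hspos]
    set g₂ := s ^ 2 - (α - s) ^ 2 with hg₂def
    have hev : ∀ᶠ τ in nhdsWithin (0:ℝ) (Ioi 0), (τ < ρ' ∧ τ ≤ 1 ∧ M * τ ≤ 2 * s ^ 2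
        ∧ |βm| * M * τ ^ ((1:ℝ) - α) + |βm + α| * M * τ ≤ g₂ / 2 ∧ τ < bdist Ω x₀) := by
      have e2 := htendid.eventually (Iio_mem_nhds hρ'pos)
      have e3 := htendid.eventually (Iic_mem_nhds (by norm_num : (0:ℝ) < 1))
      have e4 : ∀ᶠ τ in nhdsWithin (0:ℝ) (Ioi 0), M * τ ≤ 2 * s ^ 2 := by
        have := htendid.const_mul M
        rw [mul_zero] at this
        have := this.eventually (Iic_mem_nhds (by positivity : (0:ℝ) < 2 * s ^ 2))
        filter_upwards [this] with τ hτ using hτ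
      have e5 : ∀ᶠ τ in nhdsWithin (0:ℝ) (Ioi 0),
          |βm| * M * τ ^ ((1:ℝ) - α) + |βm + α| * M * τ ≤ g₂ / 2 := by
        have hF : Filter.Tendsto (fun τ : ℝ => |βm| * M * τ ^ ((1:ℝ) - α) + |βm + α| * M * τ)
            (nhdsWithin 0 (Ioi 0)) (nhds (|βm| * M * 0 + |βm + α| * M * 0)) :=
          ((htrpow ((1:ℝ) - α) (by linarith)).const_mul (|βm| * M)).add
            (htendid.const_mul (|βm + α| * M))
        rw [mul_zero, mul_zero, add_zero] at hF
        have := hF.eventually (Iic_mem_nhds (by positivity : (0:ℝ) < g₂ / 2))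
        filter_upwards [this] with τ hτ using hτ
      have e6 := htendid.eventually (Iio_mem_nhds hδx₀)
      filter_upwards [e2, e3, e4, e5, e6] with τ h2 h3 h4 h5 h6
      exact ⟨h2, h3, h4, h5, h6⟩
    obtain ⟨τ, ⟨hτρ', hτ1, hτc5, hτc6, hτx₀⟩, hτIoi⟩ :=
      (hev.and eventually_mem_nhdsWithin).exists
    have hτpos : 0 < τ := hτIoi
    have hslabV : ∀ {x : EuclideanSpace ℝ (Fin N)}, 0 < bdist Ω x → bdist Ω x ≤ τ → x ∈ V :=
      fun {x} h1 h2 => ⟨S9.mem_of_bdist_pos h1, lt_of_le_of_lt h2 hτρ'⟩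
    -- choose θ
    have hevθ : ∀ᶠ θ in nhdsWithin (0:ℝ) (Ioi 0), (θ < 1 ∧ θ ^ s ≤ 1/4 ∧ θ ^ α ≤ 1/4) := by
      have e1 := htendid.eventually (Iio_mem_nhds (by norm_num : (0:ℝ) < 1))
      have e2 := (htrpow s hspos).eventually (Iic_mem_nhds (by norm_num : (0:ℝ) < 1/4))
      have e3 := (htrpow α hαpos).eventually (Iic_mem_nhds (by norm_num : (0:ℝ) < 1/4))
      filter_upwards [e1, e2, e3] with θ h1 h2 h3
      exact ⟨h1, h2, h3⟩
    obtain ⟨θ, ⟨hθ1, hθs, hθα⟩, hθIoi⟩ := (hevθ.and eventually_mem_nhdsWithin).exists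
    have hθpos : 0 < θ := hθIoi
    have hθτpos : 0 < θ * τ := mul_pos hθpos hτpos
    have hθττ : θ * τ < τ := by nlinarith
    obtain ⟨xb, hxb⟩ := S9.exists_bdist_eq hNpos hΩb hθτpos
      (le_of_lt (lt_trans hθττ hτx₀))
    have hxbV : xb ∈ V := hslabV (hxb ▸ hθτpos) (hxb ▸ hθττ.le)
    have hhxb : 0 < h xb := hhposV xb hxbV
    have hpowb : (0:ℝ) < (θ * τ) ^ βm := Real.rpow_pos_of_pos hθτpos βm
    set C := 2 * (h xb + 1) / ((θ * τ) ^ βm) with hCdef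
    have hCpos : 0 < C := by positivity
    refine ⟨C, ?_⟩
    intro τ' hτ'pos hτ'ρ
    by_contra hcon
    push_neg at hcon
    set ε := min (τ' / 2) ((θ * τ) / 2) with hεdef
    have hεpos : 0 < ε := lt_min (by linarith) (by linarith)
    have hετ' : ε < τ' := lt_of_le_of_lt (min_le_left _ _) (by linarith)
    have hεθτ : ε < θ * τ := lt_of_le_of_lt (min_le_right _ _) (by linarith)
    have hετ : ε < τ := lt_trans hεθτ hθττ
    set B := τ ^ (βm - (1:ℝ)/2) with hBdef
    have hBpos : 0 < B := Real.rpow_pos_of_pos hτpos _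
    set φf : EuclideanSpace ℝ (Fin N) → ℝ := fun y =>
      C * ((bdist Ω y ^ βm - bdist Ω y ^ (βm + α)) - B * bdist Ω y ^ ((1:ℝ)/2)) with hφfdef
    have hφC2 : ∀ y ∈ V, ContDiffAt ℝ 2 φf y := by
      intro y hy
      have hdy : ContDiffAt ℝ 2 (bdist Ω) y := hdC2V.contDiffAt (hVopen.mem_nhds hy)
      have hpy := hVpos y hy
      exact contDiffAt_const.mul
        (((S9.c2at_rpow βm hdy hpy).sub (S9.c2at_rpow (βm + α) hdy hpy)).sub
          (contDiffAt_const.mul (S9.c2at_rpow ((1:ℝ)/2) hdy hpy)))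
    have hφsub : ∀ y ∈ V, ε < bdist Ω y → bdist Ω y < τ →
        -(lap φf y) - μ / bdist Ω y ^ 2 * φf y < 0 := by
      intro y hy hyε hyτ
      have hdy : ContDiffAt ℝ 2 (bdist Ω) y := hdC2V.contDiffAt (hVopen.mem_nhds hy)
      have hpy : 0 < bdist Ω y := hVpos y hy
      have hgrady : ‖gradient (bdist Ω) y‖ = 1 := hgradAll y (hVsubρ₀ hy)
      have c1 := S9.c2at_rpow (Ω := Ω) βm hdy hpy
      have c2 := S9.c2at_rpow (Ω := Ω) (βm + α) hdy hpy
      have c3 := S9.c2at_rpow (Ω := Ω) ((1:ℝ)/2) hdy hpy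
      have hsub1 : lap (fun z => bdist Ω z ^ βm - bdist Ω z ^ (βm + α)) y
          = lap (fun z => bdist Ω z ^ βm) y - lap (fun z => bdist Ω z ^ (βm + α)) y :=
        S9.lap_sub' c1 c2
      have hsub2 : lap (fun z => (bdist Ω z ^ βm - bdist Ω z ^ (βm + α))
            - B * bdist Ω z ^ ((1:ℝ)/2)) y
          = lap (fun z => bdist Ω z ^ βm - bdist Ω z ^ (βm + α)) y
            - B * lap (fun z => bdist Ω z ^ ((1:ℝ)/2)) y :=
        S9.lap_sub (c1.sub c2) c3 B
      have hcm : lap φf y = C * lap (fun z => (bdist Ω z ^ βm - bdist Ω z ^ (βm + α))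
            - B * bdist Ω z ^ ((1:ℝ)/2)) y :=
        S9.lap_const_mul ((c1.sub c2).sub (contDiffAt_const.mul c3)) C
      have hL1 := S9.Lmu_rpow hs2 hVopen hy hdC2V hVpos hgrady βm
      have hL2 := S9.Lmu_rpow hs2 hVopen hy hdC2V hVpos hgrady (βm + α)
      have hL3 := S9.Lmu_rpow hs2 hVopen hy hdC2V hVpos hgrady ((1:ℝ)/2)
      set t := bdist Ω y with htdef
      set D := lap (bdist Ω) y with hDdef
      have r1 : t ^ (βm - 1) = t ^ (βm + α - 2) * t ^ ((1:ℝ) - α) := by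
        rw [← Real.rpow_add hpy]; congr 1; ring
      have r3 : t ^ (βm + α - 1) = t ^ (βm + α - 2) * t := by
        rw [show βm + α - 1 = (βm + α - 2) + 1 by ring, Real.rpow_add hpy, Real.rpow_one]
      have r5 : t ^ ((1:ℝ)/2 - 1) = t ^ (-(3:ℝ)/2) * t := by
        rw [show (1:ℝ)/2 - 1 = (-(3:ℝ)/2) + 1 by norm_num, Real.rpow_add hpy, Real.rpow_one]
      have hL1' : -(lap (fun z => bdist Ω z ^ βm) y) - μ / t ^ 2 * t ^ βm
          = -(βm * (t ^ (βm + α - 2) * t ^ ((1:ℝ) - α)) * D) := by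
        rw [hL1, r1, show s ^ 2 - (βm - 1/2) ^ 2 = 0 by rw [hβmdef]; ring]
        ring
      have hL2' : -(lap (fun z => bdist Ω z ^ (βm + α)) y) - μ / t ^ 2 * t ^ (βm + α)
          = g₂ * t ^ (βm + α - 2) - (βm + α) * (t ^ (βm + α - 2) * t) * D := by
        rw [hL2, r3, show s ^ 2 - (βm + α - 1/2) ^ 2 = g₂ by rw [hg₂def, hβmdef]; ring]
      have hL3' : -(lap (fun z => bdist Ω z ^ ((1:ℝ)/2)) y) - μ / t ^ 2 * t ^ ((1:ℝ)/2)
          = s ^ 2 * t ^ (-(3:ℝ)/2) - 1/2 * (t ^ (-(3:ℝ)/2) * t) * D := by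
        rw [hL3, show (1:ℝ)/2 - 2 = -(3:ℝ)/2 by norm_num, r5]
        ring
      have hkey : -(lap φf y) - μ / t ^ 2 * φf y
          = C * ((-(lap (fun z => bdist Ω z ^ βm) y) - μ / t ^ 2 * t ^ βm)
            - (-(lap (fun z => bdist Ω z ^ (βm + α)) y) - μ / t ^ 2 * t ^ (βm + α))
            - B * (-(lap (fun z => bdist Ω z ^ ((1:ℝ)/2)) y) - μ / t ^ 2 * t ^ ((1:ℝ)/2))) := by
        have hφfy : φf y = C * ((t ^ βm - t ^ (βm + α)) - B * t ^ ((1:ℝ)/2)) := rfl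
        rw [hφfy, hcm, hsub2, hsub1]
        ring
      rw [hkey, hL1', hL2', hL3']
      have hest := S9.est2 (Real.rpow_pos_of_pos hpy (βm + α - 2))
        (Real.rpow_pos_of_pos hpy (-(3:ℝ)/2)) hpy.le hyτ.le
        (Real.rpow_nonneg hpy.le ((1:ℝ) - α))
        (Real.rpow_le_rpow hpy.le hyτ.le (by linarith : (0:ℝ) ≤ (1:ℝ) - α))
        hMpos (hM y (hVsubρ₀ hy)) hBpos.le hspos hg₂pos hτc5 hτc6 hCpos
      linarith [hest]
    have hbdry : ∀ y, (bdist Ω y = ε ∨ bdist Ω y = τ) → φf y ≤ h y := by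
      intro y hyb
      rcases hyb with hyε | hyτ
      · have hycol : y ∈ collar Ω τ' := ⟨S9.mem_of_bdist_pos (hyε ▸ hεpos), hyε ▸ hετ'⟩
        have hhy := hcon y hycol
        rw [hyε, lt_div_iff₀ (Real.rpow_pos_of_pos hεpos βm)] at hhy
        have hφfy : φf y = C * ((ε ^ βm - ε ^ (βm + α)) - B * ε ^ ((1:ℝ)/2)) := by
          have : φf y = C * ((bdist Ω y ^ βm - bdist Ω y ^ (βm + α))
              - B * bdist Ω y ^ ((1:ℝ)/2)) := rfl
          rw [this, hyε]
        have hinner : (ε ^ βm - ε ^ (βm + α)) - B * ε ^ ((1:ℝ)/2) ≤ ε ^ βm := by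
          have h1 : (0:ℝ) ≤ ε ^ (βm + α) := Real.rpow_nonneg hεpos.le _
          have h2 : (0:ℝ) ≤ B * ε ^ ((1:ℝ)/2) :=
            mul_nonneg hBpos.le (Real.rpow_nonneg hεpos.le _)
          linarith
        have := mul_le_mul_of_nonneg_left hinner hCpos.le
        rw [hφfy]
        linarith
      · have hyV : y ∈ V := hslabV (hyτ ▸ hτpos) (le_of_eq hyτ)
        have hBτ : B * τ ^ ((1:ℝ)/2) = τ ^ βm := by
          rw [hBdef, ← Real.rpow_add hτpos]; congr 1; ring
        have hφfy : φf y = C * ((τ ^ βm - τ ^ (βm + α)) - B * τ ^ ((1:ℝ)/2)) := by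
          have : φf y = C * ((bdist Ω y ^ βm - bdist Ω y ^ (βm + α))
              - B * bdist Ω y ^ ((1:ℝ)/2)) := rfl
          rw [this, hyτ]
        have hneg : φf y ≤ 0 := by
          rw [hφfy, hBτ]
          have h1 : (0:ℝ) ≤ τ ^ (βm + α) := Real.rpow_nonneg hτpos.le _
          have : (τ ^ βm - τ ^ (βm + α)) - τ ^ βm ≤ 0 := by linarith
          exact mul_nonpos_of_nonneg_of_nonpos hCpos.le this
        linarith [hhposV y hyV]
    have hres := S9.comparison (Ω := Ω) (μ := μ) (V := V) hVopen hΩb hεpos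
      (fun y hy => hslabV (lt_of_lt_of_le hεpos hy.1) hy.2)
      hhC2V hhposV hsuperV hφC2 hφsub hbdry
    have hfinal := hres xb (by rw [hxb]; exact hεθτ.le) (by rw [hxb]; exact hθττ.le)
    -- lower bound for φf xb
    have hφfxb : φf xb = C * (((θ * τ) ^ βm - (θ * τ) ^ (βm + α))
        - B * (θ * τ) ^ ((1:ℝ)/2)) := by
      have : φf xb = C * ((bdist Ω xb ^ βm - bdist Ω xb ^ (βm + α))
          - B * bdist Ω xb ^ ((1:ℝ)/2)) := rfl
      rw [this, hxb]
    have i1 : (θ * τ) ^ (βm + α) ≤ (θ * τ) ^ βm * (1/4) := by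
      rw [Real.rpow_add hθτpos]
      apply mul_le_mul_of_nonneg_left _ hpowb.le
      rw [Real.mul_rpow hθpos.le hτpos.le]
      calc θ ^ α * τ ^ α ≤ (1/4) * 1 := by
            apply mul_le_mul hθα (Real.rpow_le_one hτpos.le hτ1 hαpos.le)
              (Real.rpow_nonneg hτpos.le _) (by norm_num)
        _ = 1/4 := by norm_num
    have i3 : B * (θ * τ) ^ ((1:ℝ)/2) = (θ * τ) ^ βm * θ ^ s := by
      rw [hBdef, Real.mul_rpow hθpos.le hτpos.le, Real.mul_rpow hθpos.le hτpos.le]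
      have a1 : τ ^ (βm - (1:ℝ)/2) * τ ^ ((1:ℝ)/2) = τ ^ βm := by
        rw [← Real.rpow_add hτpos]; congr 1; ring
      have a2 : θ ^ βm * θ ^ s = θ ^ ((1:ℝ)/2) := by
        rw [← Real.rpow_add hθpos]; congr 1; rw [hβmdef]; ring
      rw [← a1, ← a2]; ring
    have i4 : B * (θ * τ) ^ ((1:ℝ)/2) ≤ (θ * τ) ^ βm * (1/4) := by
      rw [i3]
      exact mul_le_mul_of_nonneg_left hθs hpowb.le
    have hlow : C * ((θ * τ) ^ βm * (1/2)) ≤ φf xb := by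
      rw [hφfxb]
      apply mul_le_mul_of_nonneg_left _ hCpos.le
      linarith
    have hCval : C * ((θ * τ) ^ βm * (1/2)) = h xb + 1 := by
      rw [hCdef]; field_simp
    linarith
end
end

section
/- Let μ, s ∈ ℝ and p > 1, and let (d, c) be a regularized distance on Ω. Then there exists γ₀ > 0, independent of ε, such that for every γ ≥ γ₀ and every ε ≥ 0 the function ū(x) := γ·d(x)^{s/(p−1)}·(d(x) − ε)^{−2/(p−1)} is a super-solution of (*) on the open set {x ∈ Ω : d(x) > ε}. -/
open Set Metric MeasureTheory Real

noncomputable section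

lemma hasDeriv_F1 (γ a b ε : ℝ) {t : ℝ} (hε : 0 ≤ ε) (ht : ε < t) :
    HasDerivAt (fun t => γ * t ^ a * (t - ε) ^ b)
      (γ * (a * t ^ (a-1) * (t-ε) ^ b + b * t ^ a * (t-ε) ^ (b-1))) t := by
  have ht0 : t ≠ 0 := ne_of_gt (lt_of_le_of_lt hε ht)
  have htε : t - ε ≠ 0 := ne_of_gt (by linarith)
  have h1 : HasDerivAt (fun t : ℝ => t ^ a) (a * t ^ (a-1)) t :=
    Real.hasDerivAt_rpow_const (Or.inl ht0)
  have h2 : HasDerivAt (fun t : ℝ => (t - ε) ^ b) (b * (t-ε) ^ (b-1) * 1) t :=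
    by have := (Real.hasDerivAt_rpow_const (p := b) (x := t - ε) (Or.inl htε)).comp t ((hasDerivAt_id t).sub_const ε); exact this
  have h3 := (h1.const_mul γ).mul h2
  convert h3 using 1
  all_goals first | rfl | ring

lemma hasDeriv_F2 (γ a b ε : ℝ) {t : ℝ} (hε : 0 ≤ ε) (ht : ε < t) :
    HasDerivAt (fun t => γ * (a * t ^ (a-1) * (t-ε) ^ b + b * t ^ a * (t-ε) ^ (b-1)))
      (γ * (a*(a-1) * t ^ (a-2) * (t-ε) ^ b + 2*a*b * t ^ (a-1) * (t-ε) ^ (b-1)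
        + b*(b-1) * t ^ a * (t-ε) ^ (b-2))) t := by
  have ht0 : t ≠ 0 := ne_of_gt (lt_of_le_of_lt hε ht)
  have htε : t - ε ≠ 0 := ne_of_gt (by linarith)
  have h1 : HasDerivAt (fun t : ℝ => t ^ a) (a * t ^ (a-1)) t :=
    Real.hasDerivAt_rpow_const (Or.inl ht0)
  have h1' : HasDerivAt (fun t : ℝ => t ^ (a-1)) ((a-1) * t ^ (a-2)) t := by
    have := Real.hasDerivAt_rpow_const (p := a-1) (x := t) (Or.inl ht0)
    rwa [show a - 1 - 1 = a - 2 by ring] at this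
  have h2 : HasDerivAt (fun t : ℝ => (t - ε) ^ b) (b * (t-ε) ^ (b-1) * 1) t :=
    by have := (Real.hasDerivAt_rpow_const (p := b) (x := t - ε) (Or.inl htε)).comp t ((hasDerivAt_id t).sub_const ε); exact this
  have h2' : HasDerivAt (fun t : ℝ => (t - ε) ^ (b-1)) ((b-1) * (t-ε) ^ (b-2) * 1) t := by
    have := (Real.hasDerivAt_rpow_const (p := b-1) (x := t - ε) (Or.inl htε)).comp t
      ((hasDerivAt_id t).sub_const ε)
    rwa [show b - 1 - 1 = b - 2 by ring] at this
  have hA := ((h1'.const_mul a).mul h2)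
  have hB := ((h1.const_mul b).mul h2')
  have h3 := ((hA.add hB).const_mul γ)
  convert h3 using 1
  all_goals first | rfl | ring


set_option maxHeartbeats 1000000 in
lemma key_est (μ s p c γ ε t δ L g a b : ℝ) (hp : 1 < p) (hc : 1 ≤ c)
    (ha : a * (p-1) = s) (hb : b * (p-1) = -2)
    (hε : 0 ≤ ε) (ht : ε < t) (hδ2 : t ≤ c * δ) (hδ1 : c⁻¹ * δ ≤ t)
    (hL : |L| ≤ c / t) (hg0 : 0 ≤ g) (hg : g ≤ c)
    (hγ1 : 1 ≤ γ)
    (hγ : (c ^ 2 *(|a*(a-1)| + |2*a*b| + |b*(b-1)|) + c * (|a| + |b|) + |μ| * c ^ 2) * c ^ |s|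
        ≤ γ ^ (p-1)) :
    0 ≤ -((γ * (a*(a-1) * t ^ (a-2) * (t-ε) ^ b + 2*a*b * t ^ (a-1) * (t-ε) ^ (b-1)
        + b*(b-1) * t ^ a * (t-ε) ^ (b-2))) * g^2
        + (γ * (a * t ^ (a-1) * (t-ε) ^ b + b * t ^ a * (t-ε) ^ (b-1))) * L)
      - μ / δ^2 * (γ * t ^ a * (t-ε) ^ b)
      + (γ * t ^ a * (t-ε) ^ b) ^ p / δ ^ s := by
  have hc0 : (0:ℝ) < c := lt_of_lt_of_le one_pos hc
  have hti : (0:ℝ) < t := lt_of_le_of_lt hε ht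
  have hu : (0:ℝ) < t - ε := by linarith
  have hδ : (0:ℝ) < δ := by nlinarith
  have hγ0 : (0:ℝ) < γ := lt_of_lt_of_le one_pos hγ1
  set P : ℝ := t ^ a * (t-ε) ^ (b-2) with hPdef
  have hP : 0 < P := mul_pos (rpow_pos_of_pos hti a) (rpow_pos_of_pos hu (b-2))
  -- decompositions
  have hsq : (t-ε)^2 ≤ t^2 := by nlinarith
  have dec_b : (t-ε) ^ b = (t-ε) ^ (b-2) * (t-ε)^2 := by
    rw [← Real.rpow_natCast (t-ε) 2, ← Real.rpow_add hu]; norm_num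
  have dec_b1 : (t-ε) ^ (b-1) = (t-ε) ^ (b-2) * (t-ε) := by
    have h := Real.rpow_add hu (b-2) 1
    rw [Real.rpow_one, show b-2+1 = b-1 by ring] at h
    exact h
  have dec_a : t ^ a = t ^ (a-2) * t^2 := by
    rw [← Real.rpow_natCast t 2, ← Real.rpow_add hti]; norm_num
  have dec_a1 : t ^ a = t ^ (a-1) * t := by
    have h := Real.rpow_add hti (a-1) 1
    rw [Real.rpow_one, show a-1+1 = a by ring] at h
    exact h
  have m1 : t ^ (a-2) * (t-ε) ^ b ≤ P := by
    rw [dec_b, hPdef, dec_a]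
    have : t ^ (a-2) * ((t-ε)^(b-2) * (t-ε)^2) = (t^(a-2) * (t-ε)^(b-2)) * (t-ε)^2 := by ring
    rw [this]
    have h2 : (t^(a-2) * (t-ε)^(b-2)) * (t-ε)^2 ≤ (t^(a-2) * (t-ε)^(b-2)) * t^2 :=
      mul_le_mul_of_nonneg_left hsq (by positivity)
    calc (t^(a-2) * (t-ε)^(b-2)) * (t-ε)^2 ≤ (t^(a-2) * (t-ε)^(b-2)) * t^2 := h2
      _ = t^(a-2) * t^2 * (t-ε)^(b-2) := by ring
  have m2 : t ^ (a-1) * (t-ε) ^ (b-1) ≤ P := by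
    rw [dec_b1, hPdef, dec_a1]
    have : t ^ (a-1) * ((t-ε)^(b-2) * (t-ε)) = (t^(a-1) * (t-ε)^(b-2)) * (t-ε) := by ring
    rw [this]
    calc (t^(a-1) * (t-ε)^(b-2)) * (t-ε) ≤ (t^(a-1) * (t-ε)^(b-2)) * t :=
        mul_le_mul_of_nonneg_left (by linarith) (by positivity)
      _ = t^(a-1) * t * (t-ε)^(b-2) := by ring
  have m3 : t ^ (a-1) * (t-ε) ^ b ≤ t * P := by
    rw [dec_b, hPdef, dec_a]
    have h2 : (t^(a-1) * (t-ε)^(b-2)) * (t-ε)^2 ≤ (t^(a-1) * (t-ε)^(b-2)) * t^2 :=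
      mul_le_mul_of_nonneg_left hsq (by positivity)
    calc t^(a-1) * ((t-ε)^(b-2) * (t-ε)^2) = (t^(a-1) * (t-ε)^(b-2)) * (t-ε)^2 := by ring
      _ ≤ (t^(a-1) * (t-ε)^(b-2)) * t^2 := h2
      _ = t * (t^(a-1) * t * (t-ε)^(b-2)) := by ring
      _ = t * (t^(a-2) * t^2 * (t-ε)^(b-2)) := by rw [← dec_a1, dec_a]
  have m4 : t ^ a * (t-ε) ^ (b-1) ≤ t * P := by
    rw [dec_b1, hPdef]
    calc t ^ a * ((t-ε)^(b-2) * (t-ε)) = (t^a * (t-ε)^(b-2)) * (t-ε) := by ring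
      _ ≤ (t^a * (t-ε)^(b-2)) * t := mul_le_mul_of_nonneg_left (by linarith) (by positivity)
      _ = t * (t^a * (t-ε)^(b-2)) := by ring
  -- bound on second-derivative term
  set C2 : ℝ := |a*(a-1)| + |2*a*b| + |b*(b-1)| with hC2def
  have habs1 : |a*(a-1) * t ^ (a-2) * (t-ε) ^ b| ≤ |a*(a-1)| * P := by
    rw [abs_mul, abs_mul, abs_of_pos (rpow_pos_of_pos hti _), abs_of_pos (rpow_pos_of_pos hu _)]
    rw [mul_assoc]
    exact mul_le_mul_of_nonneg_left m1 (abs_nonneg _)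
  have habs2 : |2*a*b * t ^ (a-1) * (t-ε) ^ (b-1)| ≤ |2*a*b| * P := by
    rw [abs_mul, abs_mul, abs_of_pos (rpow_pos_of_pos hti _), abs_of_pos (rpow_pos_of_pos hu _)]
    rw [mul_assoc]
    exact mul_le_mul_of_nonneg_left m2 (abs_nonneg _)
  have habs3 : |b*(b-1) * t ^ a * (t-ε) ^ (b-2)| ≤ |b*(b-1)| * P := by
    rw [abs_mul, abs_mul, abs_of_pos (rpow_pos_of_pos hti _), abs_of_pos (rpow_pos_of_pos hu _)]
    rw [mul_assoc]
  have hF2 : |γ * (a*(a-1) * t ^ (a-2) * (t-ε) ^ b + 2*a*b * t ^ (a-1) * (t-ε) ^ (b-1)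
      + b*(b-1) * t ^ a * (t-ε) ^ (b-2))| ≤ γ * C2 * P := by
    rw [abs_mul, abs_of_pos hγ0]
    have hX : |a*(a-1) * t ^ (a-2) * (t-ε) ^ b + 2*a*b * t ^ (a-1) * (t-ε) ^ (b-1)
        + b*(b-1) * t ^ a * (t-ε) ^ (b-2)| ≤ C2 * P := by
      calc |a*(a-1) * t ^ (a-2) * (t-ε) ^ b + 2*a*b * t ^ (a-1) * (t-ε) ^ (b-1)
            + b*(b-1) * t ^ a * (t-ε) ^ (b-2)|
          ≤ |a*(a-1) * t ^ (a-2) * (t-ε) ^ b + 2*a*b * t ^ (a-1) * (t-ε) ^ (b-1)|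
            + |b*(b-1) * t ^ a * (t-ε) ^ (b-2)| := abs_add_le _ _
        _ ≤ |a*(a-1) * t ^ (a-2) * (t-ε) ^ b| + |2*a*b * t ^ (a-1) * (t-ε) ^ (b-1)|
            + |b*(b-1) * t ^ a * (t-ε) ^ (b-2)| := by linarith [abs_add_le (a*(a-1) * t ^ (a-2) * (t-ε) ^ b) (2*a*b * t ^ (a-1) * (t-ε) ^ (b-1))]
        _ ≤ |a*(a-1)| * P + |2*a*b| * P + |b*(b-1)| * P := by linarith
        _ = C2 * P := by rw [hC2def]; ring
    calc γ * |a*(a-1) * t ^ (a-2) * (t-ε) ^ b + 2*a*b * t ^ (a-1) * (t-ε) ^ (b-1)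
        + b*(b-1) * t ^ a * (t-ε) ^ (b-2)| ≤ γ * (C2 * P) :=
          mul_le_mul_of_nonneg_left hX hγ0.le
      _ = γ * C2 * P := by ring
  have hF1 : |γ * (a * t ^ (a-1) * (t-ε) ^ b + b * t ^ a * (t-ε) ^ (b-1))|
      ≤ γ * (|a| + |b|) * (t * P) := by
    rw [abs_mul, abs_of_pos hγ0]
    have hX : |a * t ^ (a-1) * (t-ε) ^ b + b * t ^ a * (t-ε) ^ (b-1)|
        ≤ (|a| + |b|) * (t * P) := by
      calc |a * t ^ (a-1) * (t-ε) ^ b + b * t ^ a * (t-ε) ^ (b-1)|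
          ≤ |a * t ^ (a-1) * (t-ε) ^ b| + |b * t ^ a * (t-ε) ^ (b-1)| := abs_add_le _ _
        _ ≤ |a| * (t * P) + |b| * (t * P) := by
            refine add_le_add ?_ ?_
            · rw [abs_mul, abs_mul, abs_of_pos (rpow_pos_of_pos hti _),
                abs_of_pos (rpow_pos_of_pos hu _), mul_assoc]
              exact mul_le_mul_of_nonneg_left m3 (abs_nonneg _)
            · rw [abs_mul, abs_mul, abs_of_pos (rpow_pos_of_pos hti _),
                abs_of_pos (rpow_pos_of_pos hu _), mul_assoc]
              exact mul_le_mul_of_nonneg_left m4 (abs_nonneg _)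
        _ = (|a| + |b|) * (t * P) := by ring
    calc γ * |a * t ^ (a-1) * (t-ε) ^ b + b * t ^ a * (t-ε) ^ (b-1)|
        ≤ γ * ((|a| + |b|) * (t * P)) := mul_le_mul_of_nonneg_left hX hγ0.le
      _ = γ * (|a| + |b|) * (t * P) := by ring
  -- names for the two derivative expressions
  set X2 : ℝ := γ * (a*(a-1) * t ^ (a-2) * (t-ε) ^ b + 2*a*b * t ^ (a-1) * (t-ε) ^ (b-1)
      + b*(b-1) * t ^ a * (t-ε) ^ (b-2)) with hX2def
  set X1 : ℝ := γ * (a * t ^ (a-1) * (t-ε) ^ b + b * t ^ a * (t-ε) ^ (b-1)) with hX1def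
  have hgsq : g^2 ≤ c^2 := pow_le_pow_left₀ hg0 hg 2
  have h2bound : X2 * g^2 ≤ γ * C2 * P * c^2 := by
    calc X2 * g^2 ≤ |X2| * g^2 := mul_le_mul_of_nonneg_right (le_abs_self _) (sq_nonneg g)
      _ ≤ |X2| * c^2 := mul_le_mul_of_nonneg_left hgsq (abs_nonneg _)
      _ ≤ γ * C2 * P * c^2 := mul_le_mul_of_nonneg_right hF2 (by positivity)
  have h1bound : X1 * L ≤ γ * (|a| + |b|) * c * P := by
    have h0 : X1 * L ≤ |X1| * |L| := by
      calc X1 * L ≤ |X1 * L| := le_abs_self _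
        _ = |X1| * |L| := abs_mul _ _
    have h1 : |X1| * |L| ≤ (γ * (|a| + |b|) * (t * P)) * (c/t) :=
      mul_le_mul hF1 hL (abs_nonneg _) (by positivity)
    have h2 : (γ * (|a| + |b|) * (t * P)) * (c/t) = γ * (|a| + |b|) * c * P := by
      field_simp
    linarith
  have hμb : μ/δ^2 * (γ * t ^ a * (t-ε) ^ b) ≤ |μ| * c^2 * γ * P := by
    have hua : (0:ℝ) < γ * t ^ a * (t-ε) ^ b := by positivity
    have hstep1 : μ/δ^2 * (γ * t ^ a * (t-ε) ^ b) ≤ |μ|/δ^2 * (γ * t ^ a * (t-ε) ^ b) := by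
      gcongr
      exact le_abs_self μ
    have hdd : |μ|/δ^2 ≤ |μ| * c^2 / t^2 := by
      rw [div_le_div_iff₀ (by positivity) (by positivity)]
      have ht2 : t^2 ≤ c^2 * δ^2 := by
        have := pow_le_pow_left₀ hti.le hδ2 2
        rw [mul_pow] at this
        exact this
      calc |μ| * t^2 ≤ |μ| * (c^2 * δ^2) := mul_le_mul_of_nonneg_left ht2 (abs_nonneg μ)
        _ = |μ| * c^2 * δ^2 := by ring
    have hstep2 : |μ|/δ^2 * (γ * t ^ a * (t-ε) ^ b)
        ≤ |μ| * c^2 / t^2 * (γ * t ^ a * (t-ε) ^ b) :=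
      mul_le_mul_of_nonneg_right hdd hua.le
    have hstep3 : |μ| * c^2 / t^2 * (γ * t ^ a * (t-ε) ^ b)
        = |μ| * c^2 * γ * (t ^ (a-2) * (t-ε) ^ b) := by
      rw [dec_a]
      field_simp
    have hstep4 : |μ| * c^2 * γ * (t ^ (a-2) * (t-ε) ^ b) ≤ |μ| * c^2 * γ * P :=
      mul_le_mul_of_nonneg_left m1 (by positivity)
    linarith
  -- the nonlinear term
  have hap : a*p = a + s := by linear_combination ha
  have hbp : b*p = b - 2 := by linear_combination hb
  have hup : (γ * t ^ a * (t-ε) ^ b) ^ p = γ ^ p * (t ^ s * P) := by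
    rw [Real.mul_rpow (by positivity) (by positivity),
        Real.mul_rpow (by positivity) (by positivity),
        ← Real.rpow_mul hti.le, ← Real.rpow_mul hu.le, hap, hbp,
        Real.rpow_add hti, hPdef]
    ring
  have hδs : δ ^ s ≤ c ^ |s| * t ^ s := by
    rcases le_or_gt 0 s with hs | hs
    · have hδct : δ ≤ c * t := by
        calc δ = c * (c⁻¹ * δ) := by field_simp
          _ ≤ c * t := mul_le_mul_of_nonneg_left hδ1 hc0.le
      calc δ ^ s ≤ (c*t) ^ s := Real.rpow_le_rpow hδ.le hδct hs
        _ = c ^ s * t ^ s := Real.mul_rpow hc0.le hti.le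
        _ = c ^ |s| * t ^ s := by rw [abs_of_nonneg hs]
    · have htcδ : t/c ≤ δ := by rw [div_le_iff₀ hc0]; linarith [hδ2]
      calc δ ^ s ≤ (t/c) ^ s := Real.rpow_le_rpow_of_nonpos (by positivity) htcδ hs.le
        _ = t ^ s / c ^ s := Real.div_rpow hti.le hc0.le s
        _ = c ^ |s| * t ^ s := by
            rw [abs_of_neg hs, Real.rpow_neg hc0.le, div_eq_mul_inv, mul_comm]
  have hcs : (0:ℝ) < c ^ |s| := rpow_pos_of_pos hc0 _
  have hts : (0:ℝ) < t ^ s := rpow_pos_of_pos hti _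
  have hδspos : (0:ℝ) < δ ^ s := rpow_pos_of_pos hδ _
  have hRHS : γ ^ p / c ^ |s| * P ≤ (γ * t ^ a * (t-ε) ^ b) ^ p / δ ^ s := by
    rw [hup]
    have h1 : γ ^ p * (t ^ s * P) / (c ^ |s| * t ^ s) = γ ^ p / c ^ |s| * P := by
      field_simp
    rw [← h1]
    apply div_le_div_of_nonneg_left (by positivity) hδspos hδs
  have hγp : γ ^ p = γ * γ ^ (p-1) := by
    have h := Real.rpow_add hγ0 1 (p-1)
    rw [Real.rpow_one, show 1+(p-1) = p by ring] at h
    exact h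
  have hK0 : c ^ 2 * C2 + c * (|a| + |b|) + |μ| * c ^ 2 ≤ γ ^ (p-1) / c ^ |s| :=
    (le_div_iff₀ hcs).mpr hγ
  have hKP : γ * C2 * P * c^2 + γ * (|a| + |b|) * c * P + |μ| * c^2 * γ * P
      ≤ γ ^ p / c ^ |s| * P := by
    have e1 : γ * C2 * P * c^2 + γ * (|a| + |b|) * c * P + |μ| * c^2 * γ * P
        = γ * (c ^ 2 * C2 + c * (|a| + |b|) + |μ| * c ^ 2) * P := by ring
    have e2 : γ ^ p / c ^ |s| * P = γ * (γ ^ (p-1) / c ^ |s|) * P := by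
      rw [hγp]; ring
    rw [e1, e2]
    apply mul_le_mul_of_nonneg_right _ hP.le
    exact mul_le_mul_of_nonneg_left hK0 hγ0.le
  have hsum : X2 * g^2 + X1 * L + μ/δ^2 * (γ * t ^ a * (t-ε) ^ b)
      ≤ (γ * t ^ a * (t-ε) ^ b) ^ p / δ ^ s := by
    have step1 : X2 * g^2 + X1 * L + μ/δ^2 * (γ * t ^ a * (t-ε) ^ b)
        ≤ γ * C2 * P * c^2 + γ * (|a| + |b|) * c * P + |μ| * c^2 * γ * P :=
      add_le_add (add_le_add h2bound h1bound) hμb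
    exact le_trans step1 (le_trans hKP hRHS)
  linarith [hsum]


lemma grad_apply {N : ℕ} (f : EuclideanSpace ℝ (Fin N) → ℝ) (x : EuclideanSpace ℝ (Fin N))
    (v : EuclideanSpace ℝ (Fin N)) : fderiv ℝ f x v = @inner ℝ _ _ (gradient f x) v := by
  rw [gradient]
  rw [← InnerProductSpace.toDual_apply_apply]
  simp

lemma norm_grad_sq {N : ℕ} (f : EuclideanSpace ℝ (Fin N) → ℝ) (x : EuclideanSpace ℝ (Fin N)) :
    ∑ i : Fin N, (fderiv ℝ f x (EuclideanSpace.single i 1))^2 = ‖gradient f x‖^2 := by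
  simp_rw [grad_apply, EuclideanSpace.inner_single_right, one_mul, conj_trivial]
  rw [← real_inner_self_eq_norm_sq, PiLp.inner_apply]
  simp [sq]

lemma lap_comp_s11 {N : ℕ} {G : Set (EuclideanSpace ℝ (Fin N))} (hG : IsOpen G)
    (f : EuclideanSpace ℝ (Fin N) → ℝ) (F F' F'' : ℝ → ℝ)
    (hf : ContDiffOn ℝ 2 f G)
    (hF' : ∀ y ∈ G, HasDerivAt F (F' (f y)) (f y))
    {x : EuclideanSpace ℝ (Fin N)} (hx : x ∈ G)
    (hF'' : HasDerivAt F' (F'' (f x)) (f x)) :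
    lap (fun y => F (f y)) x
      = F'' (f x) * ‖gradient f x‖ ^ 2 + F' (f x) * lap f x := by
  have hfd : ∀ y ∈ G, DifferentiableAt ℝ f y := fun y hy =>
    (hf.differentiableOn (by norm_num)).differentiableAt (hG.mem_nhds hy)
  have hDf : DifferentiableOn ℝ (fderiv ℝ f) G :=
    (hf.fderiv_of_isOpen hG (m := 1) (by norm_num)).differentiableOn one_ne_zero
  set D := fderiv ℝ (fderiv ℝ f) x with hD
  have hDx : HasFDerivAt (fderiv ℝ f) D x :=
    (hDf.differentiableAt (hG.mem_nhds hx)).hasFDerivAt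
  have hev : ∀ᶠ y in nhds x, fderiv ℝ (fun y => F (f y)) y = F' (f y) • fderiv ℝ f y := by
    filter_upwards [hG.mem_nhds hx] with y hy
    exact ((hF' y hy).comp_hasFDerivAt y (hfd y hy).hasFDerivAt).fderiv
  have key : ∀ i : Fin N,
      fderiv ℝ (fun y => fderiv ℝ (fun z => F (f z)) y (EuclideanSpace.single i 1)) x
        (EuclideanSpace.single i 1)
      = F'' (f x) * (fderiv ℝ f x (EuclideanSpace.single i 1))^2
        + F' (f x) * (D (EuclideanSpace.single i 1) (EuclideanSpace.single i 1)) := by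
    intro i
    set e : EuclideanSpace ℝ (Fin N) := EuclideanSpace.single i 1
    have hev2 : (fun y => fderiv ℝ (fun z => F (f z)) y e)
        =ᶠ[nhds x] fun y => F' (f y) * fderiv ℝ f y e := by
      filter_upwards [hev] with y hy
      rw [hy]; rfl
    rw [hev2.fderiv_eq]
    have h1 : HasFDerivAt (fun y => F' (f y)) (F'' (f x) • fderiv ℝ f x) x :=
      hF''.comp_hasFDerivAt x (hfd x hx).hasFDerivAt
    have h2 : HasFDerivAt (fun y => fderiv ℝ f y e)
        ((ContinuousLinearMap.apply ℝ ℝ e).comp D) x :=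
      (ContinuousLinearMap.apply ℝ ℝ e).hasFDerivAt.comp x hDx
    have := (h1.mul h2).fderiv
    rw [show (fun y => F' (f y) * fderiv ℝ f y e) = ((fun y => F' (f y)) * fun y => fderiv ℝ f y e) from rfl, this]
    simp [ContinuousLinearMap.apply_apply, smul_eq_mul]
    ring
  have keyf : ∀ i : Fin N,
      fderiv ℝ (fun y => fderiv ℝ f y (EuclideanSpace.single i 1)) x (EuclideanSpace.single i 1)
      = D (EuclideanSpace.single i 1) (EuclideanSpace.single i 1) := by
    intro i
    set e : EuclideanSpace ℝ (Fin N) := EuclideanSpace.single i 1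
    have h2 : HasFDerivAt (fun y => fderiv ℝ f y e)
        ((ContinuousLinearMap.apply ℝ ℝ e).comp D) x :=
      (ContinuousLinearMap.apply ℝ ℝ e).hasFDerivAt.comp x hDx
    rw [h2.fderiv]; rfl
  unfold lap
  simp_rw [key, keyf]
  rw [Finset.sum_add_distrib, ← Finset.mul_sum, ← Finset.mul_sum, norm_grad_sq]


/-- Let `μ, s ∈ ℝ`, `p > 1` and let `(d, c)` be a regularized distance
on `Ω`. Then there is `γ₀ > 0`, independent of `ε`, such that for every `γ ≥ γ₀` and
every `ε ≥ 0` the function `x ↦ γ·d(x)^{s/(p-1)}·(d(x)-ε)^{-2/(p-1)}` is a super-solution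
of `(*)` on `{x ∈ Ω : d(x) > ε}`. -/
theorem stmt11 {N : ℕ} (hN : 2 ≤ N) (Ω : Set (EuclideanSpace ℝ (Fin N)))
    (hΩo : IsOpen Ω) (hΩne : Ω.Nonempty) (hΩb : Bornology.IsBounded Ω)
    (μ s p : ℝ) (hp : 1 < p)
    (d : EuclideanSpace ℝ (Fin N) → ℝ) (c : ℝ) (hd : RegDist Ω d c) :
    ∃ γ₀, 0 < γ₀ ∧ ∀ γ, γ₀ ≤ γ → ∀ ε : ℝ, 0 ≤ ε →
      SuperSol Ω μ s p {x ∈ Ω | ε < d x}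
        (fun x => γ * d x ^ (s / (p - 1)) * (d x - ε) ^ (-(2 / (p - 1)))) := by
  obtain ⟨hc1, hdC, hdpos, hdcomp, hdgrad, hdlap⟩ := hd
  have hc0 : (0:ℝ) < c := lt_of_lt_of_le one_pos hc1
  have hp1 : (0:ℝ) < p - 1 := by linarith
  set a : ℝ := s / (p-1) with hadef
  set b : ℝ := -(2 / (p-1)) with hbdef
  have ha : a * (p-1) = s := div_mul_cancel₀ s (ne_of_gt hp1)
  have hb : b * (p-1) = -2 := by rw [hbdef]; field_simp
  set K : ℝ := (c ^ 2 * (|a*(a-1)| + |2*a*b| + |b*(b-1)|) + c * (|a| + |b|) + |μ| * c ^ 2)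
      * c ^ |s| with hKdef
  have hbne : b ≠ 0 := by
    rw [hbdef]
    have : (0:ℝ) < 2 / (p-1) := by positivity
    intro h
    rw [neg_eq_zero] at h
    linarith
  have hKpos : 0 < K := by
    have h1 : 0 < |b| := abs_pos.mpr hbne
    have hcs : 0 < c ^ |s| := Real.rpow_pos_of_pos hc0 _
    apply mul_pos _ hcs
    have h2 : 0 ≤ c^2 * (|a*(a-1)| + |2*a*b| + |b*(b-1)|) := by positivity
    have h3 : 0 ≤ |μ| * c^2 := by positivity
    have h4 : 0 < c * (|a| + |b|) :=
      mul_pos hc0 (lt_of_lt_of_le h1 (le_add_of_nonneg_left (abs_nonneg a)))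
    linarith
  refine ⟨max 1 (K ^ (1/(p-1))), lt_of_lt_of_le one_pos (le_max_left _ _), ?_⟩
  intro γ hγ ε hε
  have hγ1 : 1 ≤ γ := le_trans (le_max_left _ _) hγ
  have hγ0 : (0:ℝ) < γ := lt_of_lt_of_le one_pos hγ1
  have hγK : K ≤ γ ^ (p-1) := by
    have h1 : K ^ (1/(p-1)) ≤ γ := le_trans (le_max_right _ _) hγ
    have h2 : (K ^ (1/(p-1))) ^ (p-1) ≤ γ ^ (p-1) :=
      Real.rpow_le_rpow (Real.rpow_nonneg hKpos.le _) h1 hp1.le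
    rwa [← Real.rpow_mul hKpos.le, one_div, inv_mul_cancel₀ (ne_of_gt hp1),
      Real.rpow_one] at h2
  have hGopen : IsOpen {x ∈ Ω | ε < d x} := by
    have he : {x ∈ Ω | ε < d x} = Ω ∩ d ⁻¹' (Set.Ioi ε) := rfl
    rw [he]
    exact hdC.continuousOn.isOpen_inter_preimage hΩo isOpen_Ioi
  have hGsub : {x ∈ Ω | ε < d x} ⊆ Ω := fun x hx => hx.1
  have hdG : ContDiffOn ℝ 2 d {x ∈ Ω | ε < d x} := hdC.mono hGsub
  refine ⟨?_, ?_, ?_⟩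
  · intro x hx
    have hdxpos : 0 < d x := lt_of_le_of_lt hε hx.2
    have h2pos : 0 < d x - ε := sub_pos.mpr hx.2
    have hdx : ContDiffAt ℝ 2 d x := hdC.contDiffAt (hΩo.mem_nhds (hGsub hx))
    have h1 : ContDiffAt ℝ 2 (fun y => d y ^ a) x :=
      (Real.contDiffAt_rpow_const_of_ne (ne_of_gt hdxpos)).comp x hdx
    have h2 : ContDiffAt ℝ 2 (fun y => (d y - ε) ^ b) x :=
      by have := ContDiffAt.comp (f := fun y => d y - ε) x (Real.contDiffAt_rpow_const_of_ne (p := b) (ne_of_gt h2pos)) (hdx.sub contDiffAt_const); exact this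
    exact ((contDiffAt_const.mul h1).mul h2).contDiffWithinAt
  · intro x hx
    have hdxpos : 0 < d x := lt_of_le_of_lt hε hx.2
    have h2pos : 0 < d x - ε := sub_pos.mpr hx.2
    exact mul_pos (mul_pos hγ0 (Real.rpow_pos_of_pos hdxpos a))
      (Real.rpow_pos_of_pos h2pos b)
  · intro x hx
    obtain ⟨hxΩ, hxε⟩ := hx
    have hdxpos : 0 < d x := lt_of_le_of_lt hε hxε
    have h2pos : 0 < d x - ε := sub_pos.mpr hxε
    have hlap : lap (fun y => γ * d y ^ a * (d y - ε) ^ b) x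
        = (γ * (a*(a-1) * d x ^ (a-2) * (d x - ε) ^ b
              + 2*a*b * d x ^ (a-1) * (d x - ε) ^ (b-1)
              + b*(b-1) * d x ^ a * (d x - ε) ^ (b-2))) * ‖gradient d x‖ ^ 2
          + (γ * (a * d x ^ (a-1) * (d x - ε) ^ b + b * d x ^ a * (d x - ε) ^ (b-1)))
            * lap d x := by
      exact lap_comp_s11 hGopen d
        (fun t => γ * t ^ a * (t - ε) ^ b)
        (fun t => γ * (a * t ^ (a-1) * (t-ε) ^ b + b * t ^ a * (t-ε) ^ (b-1)))
        (fun t => γ * (a*(a-1) * t ^ (a-2) * (t-ε) ^ b + 2*a*b * t ^ (a-1) * (t-ε) ^ (b-1)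
            + b*(b-1) * t ^ a * (t-ε) ^ (b-2)))
        hdG
        (fun y hy => hasDeriv_F1 γ a b ε hε hy.2)
        ⟨hxΩ, hxε⟩
        (hasDeriv_F2 γ a b ε hε hxε)
    rw [hlap]
    exact key_est μ s p c γ ε (d x) (bdist Ω x) (lap d x) ‖gradient d x‖ a b hp hc1 ha hb
      hε hxε (hdcomp x hxΩ).2 (hdcomp x hxΩ).1 (hdlap x hxΩ) (norm_nonneg _)
      (hdgrad x hxΩ) hγ1 hγK
end
end
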